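/- arXiv:1802.07083 — 10 statements merged into one kernel-verified Lean document; each statement's English description precedes it below -/
import Mathlib

section
/- Let σ₁ and σ₂ be polyhedral cones in ℝⁿ whose intersection σ₁ ∩ σ₂ is full dimensional, and let γ₁, γ₂ ∈ ℝⁿ. Then there exists γ ∈ ℝⁿ such that (γ₁ + σ₁) ∩ (γ₂ + σ₂) ⊆ γ + (σ₁ ∩ σ₂). -/
open Matrix

/-- The polyhedral cone generated by vectors `u 0, …, u (k-1)` in `ℝⁿ`. -/
def polyCone {n k : ℕ} (u : Fin k → (Fin n → ℝ)) : Set (Fin n → ℝ) :=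
  {x | ∃ lam : Fin k → ℝ, (∀ i, 0 ≤ lam i) ∧ x = ∑ i, lam i • u i}

lemma polyCone_add {n k : ℕ} {u : Fin k → (Fin n → ℝ)} {x y : Fin n → ℝ}
    (hx : x ∈ polyCone u) (hy : y ∈ polyCone u) : x + y ∈ polyCone u := by
  obtain ⟨l, hl, hx⟩ := hx
  obtain ⟨m, hm, hy⟩ := hy
  exact ⟨l + m, fun i => add_nonneg (hl i) (hm i), by
    simp [hx, hy, add_smul, Finset.sum_add_distrib]⟩

lemma polyCone_smul {n k : ℕ} {u : Fin k → (Fin n → ℝ)} {c : ℝ} (hc : 0 ≤ c)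
    {x : Fin n → ℝ} (hx : x ∈ polyCone u) : c • x ∈ polyCone u := by
  obtain ⟨l, hl, hx⟩ := hx
  exact ⟨c • l, fun i => mul_nonneg hc (hl i), by
    simp [hx, Finset.smul_sum, smul_smul]⟩

lemma polyCone_zero {n k : ℕ} {u : Fin k → (Fin n → ℝ)} : (0 : Fin n → ℝ) ∈ polyCone u :=
  ⟨0, fun _ => le_refl 0, by simp⟩

/-- If `σ₁ ∩ σ₂` is full dimensional then the intersection of translates
`(γ₁ + σ₁) ∩ (γ₂ + σ₂)` is contained in a translate of `σ₁ ∩ σ₂`. -/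
theorem inter_translates_subset_translate {n k₁ k₂ : ℕ}
    (u₁ : Fin k₁ → (Fin n → ℝ)) (u₂ : Fin k₂ → (Fin n → ℝ))
    (hfull : Submodule.span ℝ (polyCone u₁ ∩ polyCone u₂) = ⊤) (γ₁ γ₂ : Fin n → ℝ) :
    ∃ γ : Fin n → ℝ,
      ((γ₁ + ·) '' polyCone u₁) ∩ ((γ₂ + ·) '' polyCone u₂) ⊆
        (γ + ·) '' (polyCone u₁ ∩ polyCone u₂) := by
  set τ : Set (Fin n → ℝ) := polyCone u₁ ∩ polyCone u₂ with hτ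
  have hτ_add : ∀ {x y : Fin n → ℝ}, x ∈ τ → y ∈ τ → x + y ∈ τ :=
    fun hx hy => ⟨polyCone_add hx.1 hy.1, polyCone_add hx.2 hy.2⟩
  have hτ_smul : ∀ {c : ℝ}, 0 ≤ c → ∀ {x : Fin n → ℝ}, x ∈ τ → c • x ∈ τ :=
    fun {c} hc {x} hx => ⟨polyCone_smul hc hx.1, polyCone_smul hc hx.2⟩
  have hτ_zero : (0 : Fin n → ℝ) ∈ τ := ⟨polyCone_zero, polyCone_zero⟩
  -- The set of differences of elements of τ is a submodule containing τ.
  let S : Submodule ℝ (Fin n → ℝ) :=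
    { carrier := {x | ∃ a ∈ τ, ∃ b ∈ τ, x = a - b}
      add_mem' := by
        rintro x y ⟨a, ha, b, hb, rfl⟩ ⟨a', ha', b', hb', rfl⟩
        exact ⟨a + a', hτ_add ha ha', b + b', hτ_add hb hb', by abel⟩
      zero_mem' := ⟨0, hτ_zero, 0, hτ_zero, by simp⟩
      smul_mem' := by
        rintro c x ⟨a, ha, b, hb, rfl⟩
        rcases le_total 0 c with hc | hc
        · exact ⟨c • a, hτ_smul hc ha, c • b, hτ_smul hc hb, by simp [smul_sub]⟩
        · refine ⟨(-c) • b, hτ_smul (by linarith) hb, (-c) • a, hτ_smul (by linarith) ha, ?_⟩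
          simp [smul_sub, neg_smul]
          abel }
  have hτS : τ ⊆ S := fun x hx => ⟨x, hx, 0, hτ_zero, by simp⟩
  have hS : Submodule.span ℝ τ ≤ S := Submodule.span_le.mpr hτS
  have hmem : γ₁ - γ₂ ∈ S := hS (hfull ▸ Submodule.mem_top)
  obtain ⟨a, ha, b, hb, hab⟩ := hmem
  refine ⟨γ₁ - a, ?_⟩
  rintro x ⟨⟨p, hp, rfl⟩, ⟨q, hq, hxq⟩⟩
  refine ⟨p + a, ⟨polyCone_add hp ha.1, ?_⟩, by abel⟩
  have hba : γ₁ - a = γ₂ - b := by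
    have : γ₁ - γ₂ = a - b := hab
    rw [sub_eq_sub_iff_sub_eq_sub] at this
    linear_combination this
  have hpq : p + a = q + b := by
    have : γ₂ + q = γ₁ + p := hxq
    linear_combination -this - hba
  rw [hpq]
  exact polyCone_add hq hb.2
end

section
/- Let ⪯ be a positive total order on ℝⁿ compatible with the group structure (so the first orthant is ⪯-nonnegative), let σ₁, σ₂ be ⪯-nonnegative rational polyhedral cones, and let γ₁, γ₂ ∈ ℝⁿ. Then there exist γ₃ ∈ ℝⁿ and a ⪯-nonnegative rational polyhedral cone σ₃ such that (γ₁ + σ₁) ∪ (γ₂ + σ₂) ⊆ γ₃ + σ₃. -/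
open Matrix

/-- Real vectors obtained from integer generating vectors (rational cones). -/
def ratGen {n k : ℕ} (v : Fin k → Fin n → ℤ) : Fin k → Fin n → ℝ :=
  fun i j => (v i j : ℝ)

lemma ratGen_append {n k₁ k₂ : ℕ} (v : Fin k₁ → Fin n → ℤ) (w : Fin k₂ → Fin n → ℤ) :
    ratGen (Fin.append v w) = Fin.append (ratGen v) (ratGen w) := by
  funext i j
  refine Fin.addCases (fun i => ?_) (fun i => ?_) i <;>
    simp [ratGen, Fin.append_left, Fin.append_right]

lemma mem_polyCone_append {n k₁ k₂ : ℕ} (u : Fin k₁ → Fin n → ℝ) (w : Fin k₂ → Fin n → ℝ)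
    (x : Fin n → ℝ) :
    x ∈ polyCone (Fin.append u w) ↔
      ∃ a ∈ polyCone u, ∃ b ∈ polyCone w, x = a + b := by
  constructor
  · rintro ⟨lam, hlam, rfl⟩
    refine ⟨∑ i, lam (Fin.castAdd k₂ i) • u i, ⟨_, fun i => hlam _, rfl⟩,
      ∑ i, lam (Fin.natAdd k₁ i) • w i, ⟨_, fun i => hlam _, rfl⟩, ?_⟩
    rw [Fin.sum_univ_add]
    congr 1 <;> exact Finset.sum_congr rfl (by
      intro i _
      simp [Fin.append_left, Fin.append_right])
  · rintro ⟨a, ⟨lam₁, hlam₁, rfl⟩, b, ⟨lam₂, hlam₂, rfl⟩, rfl⟩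
    refine ⟨Fin.append lam₁ lam₂, ?_, ?_⟩
    · intro i
      refine Fin.addCases (fun i => ?_) (fun i => ?_) i <;>
        simp [Fin.append_left, Fin.append_right, hlam₁, hlam₂]
    · rw [Fin.sum_univ_add]
      congr 1 <;> exact Finset.sum_congr rfl (by
        intro i _
        simp [Fin.append_left, Fin.append_right])

/-- The standard basis as integer generators. -/
def stdGen (n : ℕ) : Fin n → Fin n → ℤ := fun i j => if i = j then 1 else 0

lemma mem_polyCone_stdGen {n : ℕ} (x : Fin n → ℝ) :
    x ∈ polyCone (ratGen (stdGen n)) ↔ ∀ j, 0 ≤ x j := by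
  constructor
  · rintro ⟨lam, hlam, rfl⟩ j
    have : (∑ i, lam i • ratGen (stdGen n) i) j = lam j := by
      simp [ratGen, stdGen, Finset.sum_apply, Finset.sum_ite_eq]
    rw [this]
    exact hlam j
  · intro hx
    refine ⟨x, hx, funext fun j => ?_⟩
    simp [ratGen, stdGen, Finset.sum_apply, Finset.sum_ite_eq]

/-- For a positive total order `r` compatible with the group structure, the union of two
translated `r`-nonnegative rational polyhedral cones is contained in a translated
`r`-nonnegative rational polyhedral cone. -/
theorem union_translated_nonneg_cones {n : ℕ}
    (r : (Fin n → ℝ) → (Fin n → ℝ) → Prop)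
    (htot : ∀ a b, r a b ∨ r b a)
    (htrans : ∀ a b c, r a b → r b c → r a c)
    (hadd : ∀ a b c, r a b → r (a + c) (b + c))
    (hanti : ∀ a b, r a b → r b a → a = b)
    (hpos : ∀ x : Fin n → ℝ, (∀ i, 0 ≤ x i) → r 0 x)
    {k₁ k₂ : ℕ} (v₁ : Fin k₁ → Fin n → ℤ) (v₂ : Fin k₂ → Fin n → ℤ)
    (h₁ : ∀ x ∈ polyCone (ratGen v₁), r 0 x)
    (h₂ : ∀ x ∈ polyCone (ratGen v₂), r 0 x)
    (γ₁ γ₂ : Fin n → ℝ) :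
    ∃ (γ₃ : Fin n → ℝ) (k₃ : ℕ) (v₃ : Fin k₃ → Fin n → ℤ),
      (∀ x ∈ polyCone (ratGen v₃), r 0 x) ∧
      ((γ₁ + ·) '' polyCone (ratGen v₁)) ∪ ((γ₂ + ·) '' polyCone (ratGen v₂)) ⊆
        (γ₃ + ·) '' polyCone (ratGen v₃) := by
  classical
  set γ₃ : Fin n → ℝ := fun j => min (γ₁ j) (γ₂ j) with hγ₃
  refine ⟨γ₃, (k₁ + k₂) + n, Fin.append (Fin.append v₁ v₂) (stdGen n), ?_, ?_⟩
  · -- nonnegativity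
    intro x hx
    rw [ratGen_append, ratGen_append, mem_polyCone_append] at hx
    obtain ⟨ab, hab, c, hc, rfl⟩ := hx
    rw [mem_polyCone_append] at hab
    obtain ⟨a, ha, b, hb, rfl⟩ := hab
    have hra := h₁ a ha
    have hrb := h₂ b hb
    have hrc := hpos c ((mem_polyCone_stdGen c).1 hc)
    have h1 : r 0 (a + b) := by
      have := hadd 0 b a hrb
      rw [zero_add] at this
      exact htrans _ _ _ hra (by rwa [add_comm b a] at this)
    have := hadd 0 c (a + b) hrc
    rw [zero_add] at this
    exact htrans _ _ _ h1 (by rwa [add_comm c (a + b)] at this)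
  · -- inclusion
    have key : ∀ (γ : Fin n → ℝ), (∀ j, 0 ≤ γ j - γ₃ j) →
        ∀ (s : Fin n → ℝ), s ∈ polyCone (ratGen v₁) ∨ s ∈ polyCone (ratGen v₂) →
        γ + s ∈ (γ₃ + ·) '' polyCone (ratGen (Fin.append (Fin.append v₁ v₂) (stdGen n))) := by
      intro γ hγ s hs
      have h0₁ : (0 : Fin n → ℝ) ∈ polyCone (ratGen v₁) :=
        ⟨0, fun _ => le_refl 0, by simp⟩
      have h0₂ : (0 : Fin n → ℝ) ∈ polyCone (ratGen v₂) :=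
        ⟨0, fun _ => le_refl 0, by simp⟩
      have hst : s ∈ polyCone (Fin.append (ratGen v₁) (ratGen v₂)) := by
        rw [mem_polyCone_append]
        rcases hs with hs | hs
        · exact ⟨s, hs, 0, h0₂, by simp⟩
        · exact ⟨0, h0₁, s, hs, by simp⟩
      have hd : (γ - γ₃) ∈ polyCone (ratGen (stdGen n)) :=
        (mem_polyCone_stdGen _).2 (fun j => hγ j)
      refine ⟨s + (γ - γ₃), ?_, by ring_nf⟩
      rw [ratGen_append, ratGen_append, mem_polyCone_append]
      exact ⟨s, hst, γ - γ₃, hd, rfl⟩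
    rintro x (⟨s, hs, rfl⟩ | ⟨s, hs, rfl⟩)
    · exact key γ₁ (fun j => by simp [hγ₃, sub_nonneg, min_le_left]) s (Or.inl hs)
    · exact key γ₂ (fun j => by simp [hγ₃, sub_nonneg, min_le_right]) s (Or.inr hs)
end

section
/- Let ⪯ be a total order on ℝⁿ compatible with the additive group structure and let σ be a ⪯-nonnegative rational polyhedral cone. Then the set σ ∩ ℤⁿ, with the order induced by ⪯, is well ordered. -/
open Matrix

/-- The canonical embedding `ℤⁿ → ℝⁿ`. -/
def intCast' {n : ℕ} (α : Fin n → ℤ) : Fin n → ℝ := fun i => (α i : ℝ)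

/-- For a total order `r` on `ℝⁿ` compatible with the group structure and an
`r`-nonnegative rational polyhedral cone `σ`, the set `σ ∩ ℤⁿ` is well ordered by `r`:
every nonempty subset has an `r`-minimum. -/
theorem lattice_points_of_nonneg_cone_well_ordered {n : ℕ}
    (r : (Fin n → ℝ) → (Fin n → ℝ) → Prop)
    (htot : ∀ a b, r a b ∨ r b a)
    (htrans : ∀ a b c, r a b → r b c → r a c)
    (hadd : ∀ a b c, r a b → r (a + c) (b + c))
    (hanti : ∀ a b, r a b → r b a → a = b)
    {k : ℕ} (v : Fin k → Fin n → ℤ)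
    (hnn : ∀ x ∈ polyCone (ratGen v), r 0 x)
    (T : Set (Fin n → ℤ))
    (hT : ∀ α ∈ T, intCast' α ∈ polyCone (ratGen v))
    (hne : T.Nonempty) :
    ∃ m ∈ T, ∀ α ∈ T, r (intCast' m) (intCast' α) := by
  classical
  set B : Fin n → ℤ := fun j => ∑ i, |v i j| with hBdef
  -- decomposition of lattice points of the cone
  have decomp : ∀ α ∈ T, ∃ (m : Fin k → ℕ) (f : Fin n → ℤ),
      α = (∑ i, (m i : ℤ) • v i) + f ∧ ∀ j, |f j| ≤ B j := by
    intro α hα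
    obtain ⟨lam, hlam0, hlameq⟩ := hT α hα
    refine ⟨fun i => ⌊lam i⌋₊, α - ∑ i, (⌊lam i⌋₊ : ℤ) • v i, by ring, ?_⟩
    intro j
    have hfr : ((α j - (∑ i, (⌊lam i⌋₊ : ℤ) • v i) j : ℤ) : ℝ)
        = ∑ i, (lam i - (⌊lam i⌋₊ : ℝ)) * (v i j : ℝ) := by
      have hαj : (α j : ℝ) = ∑ i, lam i * (v i j : ℝ) := by
        have := congrFun hlameq j
        simpa [intCast', ratGen, Finset.sum_apply] using this
      push_cast [Finset.sum_apply, Finset.sum_sub_distrib]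
      rw [hαj, ← Finset.sum_sub_distrib]
      refine Finset.sum_congr rfl fun i _ => ?_
      simp only [Pi.smul_apply, zsmul_eq_mul]
      push_cast [Pi.mul_apply, Pi.intCast_apply, Pi.natCast_apply]
      ring
    have hb : |((α j - (∑ i, (⌊lam i⌋₊ : ℤ) • v i) j : ℤ) : ℝ)| ≤ ((B j : ℤ) : ℝ) := by
      rw [hfr, hBdef]
      push_cast
      refine (Finset.abs_sum_le_sum_abs _ _).trans ?_
      refine Finset.sum_le_sum fun i _ => ?_
      rw [abs_mul]
      have h1 : |lam i - (⌊lam i⌋₊ : ℝ)| ≤ 1 := by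
        rw [abs_le]
        constructor
        · have := Nat.floor_le (hlam0 i)
          linarith
        · have := Nat.lt_floor_add_one (lam i)
          linarith
      calc |lam i - (⌊lam i⌋₊ : ℝ)| * |(v i j : ℝ)| ≤ 1 * |(v i j : ℝ)| := by
            exact mul_le_mul_of_nonneg_right h1 (abs_nonneg _)
        _ = |(v i j : ℝ)| := one_mul _
    have : |α j - (∑ i, (⌊lam i⌋₊ : ℤ) • v i) j| ≤ B j := by exact_mod_cast hb
    simpa using this
  -- key monotonicity
  have intCast_add : ∀ a b : Fin n → ℤ, intCast' (a + b) = intCast' a + intCast' b := by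
    intro a b; funext j; simp [intCast']
  have key : ∀ (ma mb : Fin k → ℕ) (f : Fin n → ℤ), (∀ i, ma i ≤ mb i) →
      r (intCast' ((∑ i, (ma i : ℤ) • v i) + f)) (intCast' ((∑ i, (mb i : ℤ) • v i) + f)) := by
    intro ma mb f hle
    set A := intCast' ((∑ i, (ma i : ℤ) • v i) + f) with hA
    set d : Fin n → ℝ := fun j => ∑ i, ((mb i : ℝ) - (ma i : ℝ)) * (v i j : ℝ) with hd
    have hdc : d ∈ polyCone (ratGen v) := by
      refine ⟨fun i => (mb i : ℝ) - (ma i : ℝ), fun i => by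
        have := hle i; simp only [sub_nonneg, Nat.cast_le]; exact_mod_cast this, ?_⟩
      funext j
      simp [hd, ratGen, Finset.sum_apply]
    have h0d := hnn d hdc
    have := hadd 0 d A h0d
    have hsum : d + A = intCast' ((∑ i, (mb i : ℤ) • v i) + f) := by
      funext j
      simp only [Pi.add_apply, hd, hA, intCast', Pi.smul_apply, zsmul_eq_mul]
      push_cast [Finset.sum_apply]
      rw [← add_assoc, ← Finset.sum_add_distrib]
      congr 1
      exact Finset.sum_congr rfl fun i _ => by push_cast [Pi.mul_apply, Pi.intCast_apply, Pi.natCast_apply]; ring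
    rw [zero_add, hsum] at this
    exact this
  -- main argument by contradiction
  by_contra hmin
  push_neg at hmin
  obtain ⟨a0, ha0⟩ := hne
  choose nxt hnxt1 hnxt2 using hmin
  let x : ℕ → {a : Fin n → ℤ // a ∈ T} :=
    fun j => Nat.rec ⟨a0, ha0⟩ (fun _ p => ⟨nxt p.1 p.2, hnxt1 p.1 p.2⟩) j
  have hstep : ∀ j, ¬ r (intCast' (x j).1) (intCast' (x (j+1)).1) := fun j =>
    hnxt2 (x j).1 (x j).2
  have hchain : ∀ j, r (intCast' (x (j+1)).1) (intCast' (x j).1) := fun j =>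
    (htot _ _).resolve_left (hstep j)
  have hdesc : ∀ j j', j ≤ j' → r (intCast' (x j').1) (intCast' (x j).1) := by
    intro j j' h
    induction j' with
    | zero => cases Nat.le_zero.1 h; exact (htot _ _).elim id id
    | succ j'' ih =>
      rcases Nat.lt_or_ge j (j''+1) with h' | h'
      · exact htrans _ _ _ (hchain j'') (ih (Nat.lt_succ_iff.1 h'))
      · have : j = j'' + 1 := le_antisymm h h'
        subst this; exact (htot _ _).elim id id
  have hnoasc : ∀ j j', j < j' → ¬ r (intCast' (x j).1) (intCast' (x j').1) := by
    intro j j' h hr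
    exact hstep j (htrans _ _ _ hr (hdesc (j+1) j' h))
  choose m f hmf hfb using fun j => decomp (x j).1 (x j).2
  -- Dickson's lemma
  let g : ℕ → ((Fin k ⊕ (Fin n ⊕ Fin n)) → ℕ) := fun j =>
    Sum.elim (m j) (Sum.elim (fun a => (f j a + B a).toNat) (fun a => (B a - f j a).toNat))
  haveI : IsWellOrder ℕ (· < ·) := ⟨⟩
  obtain ⟨a, b, hab, hle⟩ := (Set.isPWO_of_wellQuasiOrderedLE (Set.univ : Set ((Fin k ⊕ (Fin n ⊕ Fin n)) → ℕ))).exists_lt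
    (f := g) (fun _ => Set.mem_univ _)
  have hmle : ∀ i, m a i ≤ m b i := fun i => hle (Sum.inl i)
  have hfeq : f a = f b := by
    funext jj
    have h1 := hle (Sum.inr (Sum.inl jj))
    have h2 := hle (Sum.inr (Sum.inr jj))
    have b1 := hfb a jj
    have b2 := hfb b jj
    simp only [g, Sum.elim_inr, Sum.elim_inl] at h1 h2
    rw [abs_le] at b1 b2
    omega
  refine hnoasc a b hab ?_
  rw [hmf a, hmf b, ← hfeq]
  exact key (m a) (m b) (f a) hmle
end

section
/- Let ω ∈ ℝⁿ be nonzero and let σ ⊆ ℝⁿ be a strongly convex polyhedral cone contained in the half-space {u | ω·u ≥ 0}. Then there exists a continuous total order ⪯ on ℝⁿ (an order of the form ≤_{(u₁,…,u_s)} given by lexicographic comparison of dot products with vectors u₁,…,u_s) that refines ≤_ω and such that σ is ⪯-nonnegative. -/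
open Matrix

/-- The continuous preorder `≤_{(w₁,…,w_s)}`: compare the tuples of dot products with
`w₁,…,w_s` lexicographically. -/
def lexLe {n s : ℕ} (w : Fin s → Fin n → ℝ) (a b : Fin n → ℝ) : Prop :=
  (∀ i, a ⬝ᵥ w i = b ⬝ᵥ w i) ∨
  ∃ i, (∀ j, j < i → a ⬝ᵥ w j = b ⬝ᵥ w j) ∧ a ⬝ᵥ w i < b ⬝ᵥ w i

lemma polyCone_single_mem {n k : ℕ} (u : Fin k → (Fin n → ℝ)) (i : Fin k) (c : ℝ)
    (hc : 0 ≤ c) : c • u i ∈ polyCone u := by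
  refine ⟨fun j => if j = i then c else 0, fun j => by positivity, ?_⟩
  rw [Finset.sum_eq_single i]
  · simp
  · intro b _ hb; simp [hb]
  · simp

/-- Key lemma: a strongly convex finitely generated cone has a vector strictly positive
on every nonzero generator. -/
lemma exists_pos_on_generators {n k : ℕ} (u : Fin k → (Fin n → ℝ))
    (hsc : ∀ x ∈ polyCone u, -x ∈ polyCone u → x = 0) :
    ∃ v : Fin n → ℝ, ∀ i, u i ≠ 0 → 0 < v ⬝ᵥ u i := by
  classical
  set S : Set (Fin n → ℝ) := u '' {i | u i ≠ 0} with hS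
  have hSfin : S.Finite := (Set.finite_range u).subset (Set.image_subset_range _ _)
  have hHc : IsCompact (convexHull ℝ S) := hSfin.isCompact_convexHull (𝕜 := ℝ)
  have h0 : (0 : Fin n → ℝ) ∉ convexHull ℝ S := by
    intro h0
    obtain ⟨ι, _, wt, z, hwt0, hwt1, hz, hsum⟩ :=
      mem_convexHull_iff_exists_fintype.1 h0
    -- pick index with positive weight
    have hex : ∃ t, 0 < wt t := by
      by_contra hno
      push_neg at hno
      have : ∀ t, wt t = 0 := fun t => le_antisymm (hno t) (hwt0 t)
      simp [this] at hwt1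
    obtain ⟨t0, ht0⟩ := hex
    obtain ⟨i0, hi0ne, hi0⟩ := hz t0
    -- choose generator index for each t
    choose idx hidxne hidx using hz
    -- y := wt t0 • z t0 is in the cone and so is -y
    have hy : wt t0 • z t0 ∈ polyCone u := by
      rw [← hidx t0]; exact polyCone_single_mem u (idx t0) _ (hwt0 t0)
    have hny : -(wt t0 • z t0) ∈ polyCone u := by
      refine ⟨fun j => ∑ t ∈ Finset.univ.erase t0, if idx t = j then wt t else 0,
        fun j => Finset.sum_nonneg fun t _ => by
          split_ifs with h
          exacts [hwt0 t, le_rfl], ?_⟩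
      have key : ∀ t, (∑ j, (if idx t = j then wt t else 0) • u j) = wt t • z t := by
        intro t
        rw [Finset.sum_eq_single (idx t)]
        · simp [hidx t]
        · intro b _ hb; simp [Ne.symm hb]
        · simp
      have hswap : (∑ j, (∑ t ∈ Finset.univ.erase t0, if idx t = j then wt t else 0) • u j)
          = ∑ t ∈ Finset.univ.erase t0, wt t • z t := by
        have : ∀ j : Fin k, (∑ t ∈ Finset.univ.erase t0, if idx t = j then wt t else 0) • u j
            = ∑ t ∈ Finset.univ.erase t0, (if idx t = j then wt t else 0) • u j := by
          intro j; rw [Finset.sum_smul]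
        rw [Finset.sum_congr rfl fun j _ => this j, Finset.sum_comm]
        exact Finset.sum_congr rfl fun t _ => key t
      rw [hswap, neg_eq_iff_add_eq_zero, add_comm,
        Finset.sum_erase_add Finset.univ _ (Finset.mem_univ t0)]
      exact hsum
    have := hsc _ hy hny
    have hzne : z t0 ≠ 0 := by rw [← hidx t0]; exact hidxne t0
    exact hzne (by simpa [smul_eq_zero, ht0.ne'] using this)
  obtain ⟨f, c, hfc, hfb⟩ :=
    geometric_hahn_banach_point_closed (convex_convexHull ℝ S) hHc.isClosed h0
  refine ⟨fun j => f (Pi.single j 1), fun i hi => ?_⟩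
  have hrep : ∀ x : Fin n → ℝ, (fun j => f (Pi.single j 1)) ⬝ᵥ x = f x := by
    intro x
    have hx : x = ∑ j, x j • (Pi.single j 1 : Fin n → ℝ) := by
      ext m
      simp [Finset.sum_apply, Pi.single_apply]
    conv_rhs => rw [hx]
    simp [dotProduct, map_sum, mul_comm]
  have hui : u i ∈ convexHull ℝ S := subset_convexHull ℝ S ⟨i, hi, rfl⟩
  have := hfb _ hui
  rw [hrep]
  have hf0 : f 0 = 0 := map_zero f
  linarith [hfc]

lemma lexLe_all_eq {n s : ℕ} (w : Fin s → Fin n → ℝ) (a b : Fin n → ℝ)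
    (h1 : lexLe w a b) (h2 : lexLe w b a) : ∀ i, a ⬝ᵥ w i = b ⬝ᵥ w i := by
  rcases h1 with h | ⟨i, hpre, hlt⟩
  · exact h
  rcases h2 with h | ⟨i', hpre', hlt'⟩
  · exact fun j => (h j).symm
  rcases lt_trichotomy i i' with hc | hc | hc
  · exact absurd (hpre' i hc) hlt.ne'
  · subst hc; exact absurd hlt' (by linarith)
  · exact absurd (hpre i' hc) hlt'.ne'

/-- Given `ω ≠ 0` and a strongly convex polyhedral cone `σ` contained in the half-space
`{u | ω·u ≥ 0}`, there is a continuous total order (of the form `≤_{(w₁,…,w_s)}`)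
refining `≤_ω` for which `σ` is nonnegative. -/
theorem exists_continuous_order_refining {n k : ℕ} (ω : Fin n → ℝ) (hω : ω ≠ 0)
    (u : Fin k → (Fin n → ℝ))
    (hsc : ∀ x ∈ polyCone u, -x ∈ polyCone u → x = 0)
    (hhalf : ∀ x ∈ polyCone u, 0 ≤ ω ⬝ᵥ x) :
    ∃ (s : ℕ) (w : Fin s → Fin n → ℝ),
      (∀ a b, lexLe w a b → lexLe w b a → a = b) ∧
      (∀ a b, lexLe w a b → ω ⬝ᵥ a ≤ ω ⬝ᵥ b) ∧
      (∀ x ∈ polyCone u, lexLe w 0 x) := by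
  classical
  obtain ⟨v, hv⟩ := exists_pos_on_generators u hsc
  -- v is strictly positive on nonzero cone elements
  have hvpos : ∀ x ∈ polyCone u, x ≠ 0 → 0 < v ⬝ᵥ x := by
    rintro x ⟨lam, hlam, rfl⟩ hx0
    have hrepr : v ⬝ᵥ (∑ i, lam i • u i) = ∑ i, lam i * (v ⬝ᵥ u i) := by
      simp only [dotProduct, Finset.sum_apply, Pi.smul_apply, smul_eq_mul, Finset.mul_sum]
      rw [Finset.sum_comm]
      exact Finset.sum_congr rfl fun i _ => Finset.sum_congr rfl fun m _ => by ring
    rw [hrepr]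
    have hterm : ∀ i, 0 ≤ lam i * (v ⬝ᵥ u i) := by
      intro i
      by_cases hui : u i = 0
      · simp [hui]
      · exact mul_nonneg (hlam i) (hv i hui).le
    have hex : ∃ i, lam i • u i ≠ 0 := by
      by_contra hno
      push_neg at hno
      exact hx0 (by simp [hno])
    obtain ⟨i0, hi0⟩ := hex
    have hl : lam i0 ≠ 0 := fun h => hi0 (by simp [h])
    have hu0 : u i0 ≠ 0 := fun h => hi0 (by simp [h])
    refine Finset.sum_pos' (fun i _ => hterm i) ⟨i0, Finset.mem_univ _, ?_⟩
    exact mul_pos ((hlam i0).lt_of_ne (Ne.symm hl)) (hv i0 hu0)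
  set w : Fin (n + 2) → Fin n → ℝ :=
    Fin.cons ω (Fin.cons v fun j => Pi.single j 1) with hw
  have hw0 : w 0 = ω := rfl
  have hw1 : w 1 = v := by
    rw [← Fin.succ_zero_eq_one, hw, Fin.cons_succ, Fin.cons_zero]
  have hwj : ∀ j : Fin n, w j.succ.succ = Pi.single j 1 := by
    intro j; rw [hw, Fin.cons_succ, Fin.cons_succ]
  refine ⟨n + 2, w, ?_, ?_, ?_⟩
  · -- antisymmetry
    intro a b h1 h2
    have hall := lexLe_all_eq w a b h1 h2
    funext j
    have := hall j.succ.succ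
    rw [hwj j, dotProduct_single, dotProduct_single] at this
    simpa using this
  · -- refines ≤_ω
    intro a b h
    rcases h with h | ⟨i, hpre, hlt⟩
    · have := h 0
      rw [hw0] at this
      rw [dotProduct_comm ω a, dotProduct_comm ω b]
      exact this.le
    · rcases eq_or_ne i 0 with rfl | hne
      · rw [hw0] at hlt
        rw [dotProduct_comm ω a, dotProduct_comm ω b]
        exact hlt.le
      · have := hpre 0 (Fin.pos_of_ne_zero hne)
        rw [hw0] at this
        rw [dotProduct_comm ω a, dotProduct_comm ω b]
        exact this.le
  · -- σ nonnegative
    intro x hx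
    by_cases hx0 : x = 0
    · subst hx0; exact Or.inl fun i => rfl
    · right
      have hvx : 0 < v ⬝ᵥ x := hvpos x hx hx0
      rcases (hhalf x hx).eq_or_lt with heq | hlt
      · refine ⟨1, ?_, ?_⟩
        · intro j hj
          have hj0 : j = 0 := by
            have h1 : j.val < 1 := by
              simpa using (Fin.lt_iff_val_lt_val.mp hj)
            have h2 : j.val = 0 := by omega
            exact Fin.ext (by simp [h2])
          subst hj0
          rw [hw0, zero_dotProduct, dotProduct_comm, ← heq]
        · rw [hw1, zero_dotProduct, dotProduct_comm]
          exact hvx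
      · refine ⟨0, fun j hj => absurd hj (Fin.not_lt_zero j), ?_⟩
        rw [hw0, zero_dotProduct, dotProduct_comm]
        exact hlt
end

section
/- Let u₁, u₂, …, u_n be a basis of ℝⁿ and let S ⊆ ℝⁿ. Then S is contained in the intersection, over all sign choices ε₂,…,ε_n ∈ {−1,1}, of the sets of elements that are ≥_{(u₁, ε₂u₂,…,ε_n u_n)}-nonnegative, if and only if S ⊆ {v | v·u₁ ≥ 0} and S ∩ {v | v·u₁ = 0} ⊆ {0}. -/
open Matrix

/-- For a basis `u 0, …, u n` of `ℝ^(n+1)` and a set `S`: `S` consists of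
nonnegative elements for all the lexicographic preorders `≤_{(u₁,ε₂u₂,…,ε_nu_n)}`
over all sign choices `εᵢ ∈ {-1,1}` iff `S` lies in the half-space `{v | v·u₁ ≥ 0}`
and `S ∩ u₁^⊥ ⊆ {0}`. -/
theorem nonneg_for_all_sign_choices_iff {n : ℕ} (u : Fin (n + 1) → (Fin (n + 1) → ℝ))
    (hli : LinearIndependent ℝ u)
    (hsp : Submodule.span ℝ (Set.range u) = ⊤)
    (S : Set (Fin (n + 1) → ℝ)) :
    (∀ ε : Fin (n + 1) → ℝ, ε 0 = 1 → (∀ i, ε i = 1 ∨ ε i = -1) →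
        ∀ s ∈ S, lexLe (fun i => ε i • u i) 0 s) ↔
      ((∀ s ∈ S, 0 ≤ s ⬝ᵥ u 0) ∧ ∀ s ∈ S, s ⬝ᵥ u 0 = 0 → s = 0) := by
  classical
  constructor
  · intro H
    constructor
    · intro s hs
      have h := H (fun _ => 1) rfl (fun _ => Or.inl rfl) s hs
      rcases h with h | ⟨i, hji, hi⟩
      · have := h 0
        simp [dotProduct_smul] at this ⊢
        linarith
      · simp only [zero_dotProduct, dotProduct_smul, one_smul, smul_eq_mul, one_mul] at hji hi
        rcases eq_or_ne i 0 with rfl | hne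
        · linarith
        · have h0 : (0 : Fin (n+1)) < i := Fin.pos_of_ne_zero hne
          have := hji 0 h0
          linarith
    · intro s hs hs0
      by_contra hsne
      -- there exists i with s ⬝ᵥ u i ≠ 0
      have hex : ∃ i, s ⬝ᵥ u i ≠ 0 := by
        by_contra hall
        push_neg at hall
        apply hsne
        have hall' : ∀ w : Fin (n+1) → ℝ, s ⬝ᵥ w = 0 := by
          intro w
          have hw : w ∈ Submodule.span ℝ (Set.range u) := by rw [hsp]; trivial
          induction hw using Submodule.span_induction with
          | mem x hx => obtain ⟨i, rfl⟩ := hx; exact hall i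
          | zero => simp
          | add x y _ _ hx hy => simp [dotProduct_add, hx, hy]
          | smul c x _ hx => simp [dotProduct_smul, hx]
        have := hall' s
        exact (dotProduct_self_eq_zero).mp this
      -- take minimal such i
      set T : Finset (Fin (n+1)) := Finset.univ.filter (fun j => s ⬝ᵥ u j ≠ 0) with hT
      have hTne : T.Nonempty := by
        obtain ⟨i, hi⟩ := hex
        exact ⟨i, by simp [hT, hi]⟩
      obtain ⟨i, hiT, hmin⟩ := Finset.exists_min_image T id hTne
      have hine : s ⬝ᵥ u i ≠ 0 := by simpa [hT] using hiT
      have hlt : ∀ j, j < i → s ⬝ᵥ u j = 0 := by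
        intro j hj
        by_contra hj0
        have : i ≤ j := hmin j (by simp [hT, hj0])
        exact absurd hj (not_lt.mpr this)
      have hi0 : i ≠ 0 := by rintro rfl; exact hine hs0
      set ε : Fin (n+1) → ℝ := fun j => if j = i then (if 0 < s ⬝ᵥ u i then -1 else 1) else 1
        with hε
      have hε0 : ε 0 = 1 := by simp [hε, Ne.symm hi0]
      have hεsigns : ∀ j, ε j = 1 ∨ ε j = -1 := by
        intro j; simp only [hε]; split_ifs <;> simp
      have hεi : ε i * (s ⬝ᵥ u i) < 0 := by
        simp only [hε, if_pos rfl]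
        rcases lt_or_gt_of_ne hine with h | h
        · rw [if_neg (by linarith)]; linarith
        · rw [if_pos h]; linarith
      have h := H ε hε0 hεsigns s hs
      rcases h with h | ⟨k, hjk, hk⟩
      · have := h i
        simp only [zero_dotProduct, dotProduct_smul, smul_eq_mul] at this
        rw [← this] at hεi
        simp at hεi
      · simp only [zero_dotProduct, dotProduct_smul, smul_eq_mul] at hjk hk
        rcases lt_trichotomy k i with h1 | h1 | h1
        · have := hlt k h1
          rw [this, mul_zero] at hk
          exact lt_irrefl 0 hk
        · subst h1; linarith
        · have := hjk i h1
          rw [← this] at hεi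
          simp at hεi
  · rintro ⟨h1, h2⟩ ε hε0 hεs s hs
    rcases eq_or_lt_of_le (h1 s hs) with heq | hlt
    · have : s = 0 := h2 s hs heq.symm
      subst this
      exact Or.inl (fun _ => rfl)
    · refine Or.inr ⟨0, fun j hj => absurd hj (by simp), ?_⟩
      simp only [zero_dotProduct, dotProduct_smul, smul_eq_mul, hε0, one_mul]
      exact hlt
end

section
/- Let ω ∈ ℝⁿ be nonzero, let σ ⊆ ℝⁿ be a strongly convex polyhedral cone, and let u₂,…,u_n be such that ω, u₂,…,u_n form a basis of ℝⁿ. Then the following are equivalent: (i) σ is ≤_{(ω, ε₂u₂,…,ε_n u_n)}-nonnegative for all sign choices εᵢ ∈ {−1,1}; (ii) σ is ⪯-nonnegative for every continuous preorder ⪯ refining ≤_ω; (iii) ω lies in the relative interior of the dual cone σ^∨. -/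
open Matrix

/-- The dual cone of a set in `ℝⁿ`. -/
def dualCone {n : ℕ} (S : Set (Fin n → ℝ)) : Set (Fin n → ℝ) :=
  {v | ∀ u ∈ S, 0 ≤ v ⬝ᵥ u}

lemma dotProduct_finset_sum {n : ℕ} {ι : Type*} (v : Fin n → ℝ) (f : ι → Fin n → ℝ)
    (s : Finset ι) : v ⬝ᵥ (∑ i ∈ s, f i) = ∑ i ∈ s, v ⬝ᵥ f i := by
  classical
  induction s using Finset.induction with
  | empty => simp
  | insert _ _ h ih => simp [Finset.sum_insert h, dotProduct_add, ih]

lemma lexLe_total {n s : ℕ} (w : Fin s → Fin n → ℝ) (a b : Fin n → ℝ) :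
    lexLe w a b ∨ lexLe w b a := by
  classical
  by_cases h : ∀ i, a ⬝ᵥ w i = b ⬝ᵥ w i
  · exact Or.inl (Or.inl h)
  · push_neg at h
    have hne : (Finset.univ.filter (fun i => a ⬝ᵥ w i ≠ b ⬝ᵥ w i)).Nonempty := by
      obtain ⟨i, hi⟩ := h
      exact ⟨i, by simp [hi]⟩
    set i0 := (Finset.univ.filter (fun i => a ⬝ᵥ w i ≠ b ⬝ᵥ w i)).min' hne with hi0
    have hmem : a ⬝ᵥ w i0 ≠ b ⬝ᵥ w i0 := by
      have := Finset.min'_mem _ hne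
      simpa using this
    have hlt : ∀ j, j < i0 → a ⬝ᵥ w j = b ⬝ᵥ w j := by
      intro j hj
      by_contra hc
      exact absurd (Finset.min'_le _ j (by simp [hc])) (not_le.2 hj)
    rcases lt_or_gt_of_ne hmem with hc | hc
    · exact Or.inl (Or.inr ⟨i0, hlt, hc⟩)
    · exact Or.inr (Or.inr ⟨i0, fun j hj => (hlt j hj).symm, hc⟩)

lemma pos_of_mem_interior {n k : ℕ} (g : Fin k → Fin n → ℝ) (ω : Fin n → ℝ)
    (hω : ω ∈ interior (dualCone (polyCone g))) :
    ∀ x ∈ polyCone g, x ≠ 0 → 0 < ω ⬝ᵥ x := by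
  intro x hx hx0
  obtain ⟨ε, hε, hball⟩ := Metric.isOpen_iff.1 isOpen_interior ω hω
  have hxx : 0 < x ⬝ᵥ x := by
    have hnn : 0 ≤ x ⬝ᵥ x := Finset.sum_nonneg fun i _ => mul_self_nonneg _
    have hne' : x ⬝ᵥ x ≠ 0 := fun h => hx0 (dotProduct_self_eq_zero.1 h)
    exact lt_of_le_of_ne hnn (Ne.symm hne')
  set t : ℝ := ε / (2 * (‖x‖ + 1)) with ht
  have hxpos : (0:ℝ) < ‖x‖ + 1 := by positivity
  have htpos : 0 < t := by positivity
  have hdist : dist (ω - t • x) ω < ε := by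
    rw [dist_eq_norm]
    have : ω - t • x - ω = -(t • x) := by module
    rw [this, norm_neg, norm_smul]
    have h1 : ‖t‖ = t := abs_of_pos htpos
    rw [h1]
    calc t * ‖x‖ < t * (2 * (‖x‖ + 1)) := by
          apply mul_lt_mul_of_pos_left _ htpos
          nlinarith [norm_nonneg x]
      _ = ε := by rw [ht]; field_simp [hxpos.ne']
  have hmem : ω - t • x ∈ dualCone (polyCone g) :=
    interior_subset (hball (by simpa [Metric.mem_ball] using hdist))
  have := hmem x hx
  have hsub : (ω - t • x) ⬝ᵥ x = ω ⬝ᵥ x - t * (x ⬝ᵥ x) := by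
    simp [sub_dotProduct, smul_dotProduct, smul_eq_mul]
  rw [hsub] at this
  nlinarith

lemma mem_interior_of_pos {n k : ℕ} (g : Fin k → Fin n → ℝ) (ω : Fin n → ℝ)
    (h : ∀ x ∈ polyCone g, x ≠ 0 → 0 < ω ⬝ᵥ x) :
    ω ∈ interior (dualCone (polyCone g)) := by
  classical
  have hg : ∀ i, g i ∈ polyCone g := by
    intro i
    have hpsingle : ∀ j : Fin k, (0:ℝ) ≤ Pi.single (M := fun _ : Fin k => ℝ) i 1 j := by
      intro j
      rcases eq_or_ne j i with rfl | hj
      · simp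
      · simp [Pi.single_eq_of_ne hj]
    refine ⟨Pi.single (M := fun _ : Fin k => ℝ) i 1, hpsingle, ?_⟩
    rw [Finset.sum_eq_single i]
    · simp
    · intro j _ hj; simp [Pi.single_apply, hj]
    · simp
  set U : Set (Fin n → ℝ) := {v | ∀ i, g i ≠ 0 → 0 < v ⬝ᵥ g i} with hU
  have hUopen : IsOpen U := by
    have : U = ⋂ i, {v | g i ≠ 0 → 0 < v ⬝ᵥ g i} := by
      ext v; simp [hU, Set.mem_iInter]
    rw [this]
    apply isOpen_iInter_of_finite
    intro i
    by_cases hgi : g i = 0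
    · simp [hgi]
    · have : {v : Fin n → ℝ | g i ≠ 0 → 0 < v ⬝ᵥ g i} = {v | 0 < v ⬝ᵥ g i} := by
        ext v; simp [hgi]
      rw [this]
      exact isOpen_lt continuous_const (by unfold dotProduct; fun_prop)
  have hωU : ω ∈ U := fun i hgi => h (g i) (hg i) hgi
  have hUsub : U ⊆ dualCone (polyCone g) := by
    rintro v hv x ⟨lam, hlam, rfl⟩
    rw [dotProduct_finset_sum]
    apply Finset.sum_nonneg
    intro i _
    rw [dotProduct_smul, smul_eq_mul]
    by_cases hgi : g i = 0
    · simp [hgi]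
    · exact mul_nonneg (hlam i) (le_of_lt (hv i hgi))
  exact mem_interior.2 ⟨U, hUsub, hUopen, hωU⟩

lemma pos_of_signs {n k : ℕ} (ω : Fin (n + 1) → ℝ) (g : Fin k → (Fin (n + 1) → ℝ))
    (u : Fin (n + 1) → (Fin (n + 1) → ℝ)) (hu0 : u 0 = ω)
    (hsp : Submodule.span ℝ (Set.range u) = ⊤)
    (hi : ∀ ε : Fin (n + 1) → ℝ, ε 0 = 1 → (∀ i, ε i = 1 ∨ ε i = -1) →
        ∀ x ∈ polyCone g, lexLe (fun i => ε i • u i) 0 x) :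
    ∀ x ∈ polyCone g, x ≠ 0 → 0 < ω ⬝ᵥ x := by
  classical
  intro x hx hx0
  by_contra hle
  push_neg at hle
  -- there is a minimal index with x ⬝ᵥ u i ≠ 0
  have hne : (Finset.univ.filter (fun i => x ⬝ᵥ u i ≠ 0)).Nonempty := by
    by_contra hc
    rw [Finset.not_nonempty_iff_eq_empty] at hc
    have hall : ∀ i, x ⬝ᵥ u i = 0 := by
      intro i
      by_contra hxi
      have : i ∈ Finset.univ.filter (fun i => x ⬝ᵥ u i ≠ 0) := by simp [hxi]
      simp [hc] at this
    have hxmem : x ∈ Submodule.span ℝ (Set.range u) := hsp ▸ Submodule.mem_top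
    obtain ⟨c, hc'⟩ := (Finsupp.mem_span_range_iff_exists_finsupp).1 hxmem
    have : x ⬝ᵥ x = 0 := by
      have h2 : x ⬝ᵥ x = x ⬝ᵥ (c.sum fun i a => a • u i) := by rw [hc']
      rw [h2, Finsupp.sum, dotProduct_finset_sum]
      apply Finset.sum_eq_zero
      intro i _
      rw [dotProduct_smul, hall i, smul_zero]
    exact hx0 (dotProduct_self_eq_zero.1 this)
  set i0 := (Finset.univ.filter (fun i => x ⬝ᵥ u i ≠ 0)).min' hne with hi0def
  have hi0ne : x ⬝ᵥ u i0 ≠ 0 := by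
    have := Finset.min'_mem _ hne; simpa using this
  have hi0min : ∀ j, j < i0 → x ⬝ᵥ u j = 0 := by
    intro j hj
    by_contra hc
    exact absurd (Finset.min'_le _ j (by simp [hc])) (not_le.2 hj)
  have hxω : x ⬝ᵥ u 0 ≤ 0 := by rw [hu0, dotProduct_comm]; exact hle
  set ε : Fin (n + 1) → ℝ := fun j => if 0 < x ⬝ᵥ u j then -1 else 1 with hε
  have hε0 : ε 0 = 1 := by simp [hε, not_lt.2 hxω]
  have hεpm : ∀ i, ε i = 1 ∨ ε i = -1 := by
    intro i; by_cases h : 0 < x ⬝ᵥ u i <;> simp [hε, h]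
  have hkey := hi ε hε0 hεpm x hx
  have hneg : x ⬝ᵥ (ε i0 • u i0) < 0 := by
    rw [dotProduct_smul, smul_eq_mul]
    rcases hi0ne.lt_or_gt with h | h
    · have : ε i0 = 1 := by simp [hε, not_lt.2 h.le]
      rw [this]; linarith
    · have : ε i0 = -1 := by simp [hε, h]
      rw [this]; linarith
  rcases hkey with hcase | ⟨i, hij, hilt⟩
  · have := hcase i0
    rw [zero_dotProduct] at this
    rw [← this] at hneg
    exact lt_irrefl 0 hneg
  · rw [zero_dotProduct] at hilt
    rcases lt_trichotomy i i0 with h | h | h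
    · have : x ⬝ᵥ (ε i • u i) = 0 := by
        rw [dotProduct_smul, hi0min i h, smul_zero]
      rw [this] at hilt; exact lt_irrefl 0 hilt
    · rw [h] at hilt; linarith
    · have := hij i0 h
      rw [zero_dotProduct] at this
      rw [← this] at hneg
      exact lt_irrefl 0 hneg

/-- For `ω ≠ 0`, a strongly convex polyhedral cone `σ`, and `u` a basis of `ℝⁿ` with
`u 0 = ω`, the following are equivalent: (i) `σ` is `≤_{(ω,ε₂u₂,…,ε_nu_n)}`-nonnegative
for all sign choices; (ii) `σ` is `⪯`-nonnegative for every continuous preorder `⪯`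
refining `≤_ω`; (iii) `ω` lies in the (relative) interior of the dual cone `σ^∨`
(which is the interior since `σ^∨` is full dimensional). Stated as (i) ↔ (iii) and
(ii) ↔ (iii). -/
theorem nonneg_tfae_interior_dual {n k : ℕ} (ω : Fin (n + 1) → ℝ) (hω : ω ≠ 0)
    (g : Fin k → (Fin (n + 1) → ℝ))
    (hsc : ∀ x ∈ polyCone g, -x ∈ polyCone g → x = 0)
    (u : Fin (n + 1) → (Fin (n + 1) → ℝ)) (hu0 : u 0 = ω)
    (hli : LinearIndependent ℝ u)
    (hsp : Submodule.span ℝ (Set.range u) = ⊤) :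
    ((∀ ε : Fin (n + 1) → ℝ, ε 0 = 1 → (∀ i, ε i = 1 ∨ ε i = -1) →
        ∀ x ∈ polyCone g, lexLe (fun i => ε i • u i) 0 x) ↔
      ω ∈ interior (dualCone (polyCone g))) ∧
    ((∀ (s : ℕ) (w : Fin s → Fin (n + 1) → ℝ),
        (∀ a b, lexLe w a b → ω ⬝ᵥ a ≤ ω ⬝ᵥ b) →
        ∀ x ∈ polyCone g, lexLe w 0 x) ↔
      ω ∈ interior (dualCone (polyCone g))) := by
  -- (iii) implies (ii)
  have h32 : ω ∈ interior (dualCone (polyCone g)) →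
      ∀ (s : ℕ) (w : Fin s → Fin (n + 1) → ℝ),
        (∀ a b, lexLe w a b → ω ⬝ᵥ a ≤ ω ⬝ᵥ b) →
        ∀ x ∈ polyCone g, lexLe w 0 x := by
    intro hint s w hw x hx
    by_cases hx0 : x = 0
    · subst hx0; exact Or.inl fun i => rfl
    · have hpos := pos_of_mem_interior g ω hint x hx hx0
      rcases lexLe_total w 0 x with h | h
      · exact h
      · have := hw x 0 h
        rw [dotProduct_zero] at this
        linarith
  -- (ii) implies (i)
  have h21 : (∀ (s : ℕ) (w : Fin s → Fin (n + 1) → ℝ),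
        (∀ a b, lexLe w a b → ω ⬝ᵥ a ≤ ω ⬝ᵥ b) →
        ∀ x ∈ polyCone g, lexLe w 0 x) →
      ∀ ε : Fin (n + 1) → ℝ, ε 0 = 1 → (∀ i, ε i = 1 ∨ ε i = -1) →
        ∀ x ∈ polyCone g, lexLe (fun i => ε i • u i) 0 x := by
    intro h2 ε hε0 hεpm x hx
    apply h2 (n + 1) (fun i => ε i • u i) _ x hx
    intro a b hab
    have hw0 : ∀ y : Fin (n+1) → ℝ, y ⬝ᵥ (ε 0 • u 0) = ω ⬝ᵥ y := by
      intro y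
      rw [hε0, one_smul, hu0, dotProduct_comm]
    rcases hab with hcase | ⟨i, hij, hilt⟩
    · have := hcase 0
      rw [hw0 a, hw0 b] at this
      exact le_of_eq this
    · rcases eq_or_ne i 0 with rfl | hine
      · rw [hw0 a, hw0 b] at hilt
        exact le_of_lt hilt
      · have := hij 0 (Fin.pos_of_ne_zero hine)
        rw [hw0 a, hw0 b] at this
        exact le_of_eq this
  -- (i) implies (iii)
  have h13 : (∀ ε : Fin (n + 1) → ℝ, ε 0 = 1 → (∀ i, ε i = 1 ∨ ε i = -1) →
        ∀ x ∈ polyCone g, lexLe (fun i => ε i • u i) 0 x) →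
      ω ∈ interior (dualCone (polyCone g)) := by
    intro h1
    exact mem_interior_of_pos g ω (pos_of_signs ω g u hu0 hsp h1)
  exact ⟨⟨h13, fun h => h21 (h32 h)⟩, ⟨fun h => h13 (h21 h), h32⟩⟩
end

section
/- Let K be a field, σ a strongly convex rational polyhedral cone containing the first orthant, and ⪯ a positive continuous total order on ℝⁿ such that σ is ⪯-nonnegative. Let ξ be a formal Laurent series (a function ℤⁿ → K) with support contained in γ + σ for some γ ∈ ℤⁿ, and let ω ∈ σ^∨. Then the set {α·ω | α ∈ Supp(ξ)} has a minimum (when ξ ≠ 0). -/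
open Matrix

noncomputable def denomD {n k : ℕ} (v : Fin k → Fin n → ℤ) (S : Finset (Fin k)) : ℕ :=
  max ((Matrix.of fun i j : S => (v i ⬝ᵥ v j : ℤ)).det).natAbs 1


lemma cone_cara {n k : ℕ} (v : Fin k → Fin n → ℝ) :
    ∀ (N : ℕ) (lam : Fin k → ℝ),
      (Finset.univ.filter fun i => lam i ≠ 0).card ≤ N → (∀ i, 0 ≤ lam i) →
      ∃ (S : Finset (Fin k)) (mu : Fin k → ℝ),
        (∀ i, 0 ≤ mu i) ∧ (∀ i, i ∉ S → mu i = 0) ∧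
        (∑ i, mu i • v i = ∑ i, lam i • v i) ∧
        LinearIndependent ℝ (fun i : S => v i) := by
  classical
  intro N
  induction N with
  | zero =>
    intro lam hcard h0
    have hemp : (Finset.univ.filter fun i => lam i ≠ 0) = ∅ :=
      Finset.card_eq_zero.mp (Nat.le_zero.mp hcard)
    have hz : ∀ i, lam i = 0 := by
      intro i
      by_contra hi
      have : i ∈ (Finset.univ.filter fun i => lam i ≠ 0) := by simp [hi]
      simp [hemp] at this
    refine ⟨∅, lam, h0, fun i _ => hz i, rfl, ?_⟩
    have : IsEmpty ((∅ : Finset (Fin k)) : Type) := by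
      simp only [Finset.isEmpty_coe_sort]
    exact linearIndependent_empty_type
  | succ N ih =>
    intro lam hcard h0
    set S₀ := (Finset.univ.filter fun i => lam i ≠ 0) with hS₀
    by_cases hind : LinearIndependent ℝ (fun i : S₀ => v i)
    · refine ⟨S₀, lam, h0, ?_, rfl, hind⟩
      intro i hi
      by_contra h
      exact hi (by simp [hS₀, h])
    · obtain ⟨g, hgsum, i₁, hgi₁⟩ := Fintype.not_linearIndependent_iff.mp hind
      set G : Fin k → ℝ := fun i => if h : i ∈ S₀ then g ⟨i, h⟩ else 0 with hG
      have hGsum : ∑ i, G i • v i = 0 := by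
        rw [← Finset.sum_subset (Finset.subset_univ S₀) (by
          intro i _ hi; simp [hG, hi])]
        rw [← Finset.sum_attach S₀ (fun i => G i • v i)]
        rw [← hgsum]
        apply Finset.sum_congr rfl
        intro i _
        simp [hG, i.2]
      have hGne : G (i₁ : Fin k) ≠ 0 := by simpa [hG, i₁.2] using hgi₁
      -- reduce to the case of a relation with a positive coefficient
      have main : ∀ g' : Fin k → ℝ, (∑ i, g' i • v i = 0) → (∃ i, 0 < g' i) →
          (∀ i, lam i = 0 → g' i = 0) →
          ∃ (S : Finset (Fin k)) (mu : Fin k → ℝ),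
            (∀ i, 0 ≤ mu i) ∧ (∀ i, i ∉ S → mu i = 0) ∧
            (∑ i, mu i • v i = ∑ i, lam i • v i) ∧
            LinearIndependent ℝ (fun i : S => v i) := by
        intro g' hsum0 ⟨ip, hip⟩ hvan
        set T := (Finset.univ.filter fun i => 0 < g' i) with hT
        have hTne : T.Nonempty := ⟨ip, by simp [hT, hip]⟩
        obtain ⟨i₀, hi₀T, hmin⟩ := T.exists_min_image (fun i => lam i / g' i) hTne
        have hgi₀ : 0 < g' i₀ := by simpa [hT] using hi₀T
        set t := lam i₀ / g' i₀ with ht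
        have ht0 : 0 ≤ t := div_nonneg (h0 i₀) hgi₀.le
        set lam' : Fin k → ℝ := fun i => lam i - t * g' i with hlam'
        have hnn : ∀ i, 0 ≤ lam' i := by
          intro i
          rcases le_or_gt (g' i) 0 with hgi | hgi
          · have : t * g' i ≤ 0 := mul_nonpos_of_nonneg_of_nonpos ht0 hgi
            simp only [hlam']
            linarith [h0 i]
          · have hiT : i ∈ T := by simp [hT, hgi]
            have := hmin i hiT
            have : t * g' i ≤ lam i := by
              rw [ht] at this ⊢
              calc lam i₀ / g' i₀ * g' i ≤ lam i / g' i * g' i := by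
                    exact mul_le_mul_of_nonneg_right this hgi.le
                _ = lam i := div_mul_cancel₀ _ hgi.ne'
            simp only [hlam']; linarith
        have hsub : (Finset.univ.filter fun i => lam' i ≠ 0) ⊆ S₀.erase i₀ := by
          intro i hi
          simp only [Finset.mem_filter] at hi
          refine Finset.mem_erase.mpr ⟨?_, ?_⟩
          · rintro rfl
            apply hi.2
            simp only [hlam', ht]
            field_simp
            ring
          · by_contra hlam0
            have h1 : lam i = 0 := by simpa [hS₀] using hlam0
            have h2 : g' i = 0 := hvan i h1
            exact hi.2 (by simp [hlam', h1, h2])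
        have hi₀S₀ : i₀ ∈ S₀ := by
          simp only [hS₀, Finset.mem_filter, Finset.mem_univ, true_and]
          intro h
          exact hgi₀.ne' (hvan i₀ h)
        have hcard' : (Finset.univ.filter fun i => lam' i ≠ 0).card ≤ N := by
          have h1 := Finset.card_le_card hsub
          have h2 : (S₀.erase i₀).card = S₀.card - 1 := Finset.card_erase_of_mem hi₀S₀
          have h3 : S₀.card ≤ N + 1 := hcard
          omega
        have hsum' : ∑ i, lam' i • v i = ∑ i, lam i • v i := by
          have : ∑ i, (t * g' i) • v i = 0 := by
            have := congrArg (fun y => t • y) hsum0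
            simpa [Finset.smul_sum, smul_smul] using this
          simp only [hlam', sub_smul, Finset.sum_sub_distrib, this, sub_zero]
        obtain ⟨S, mu, hmu0, hmuS, hmusum, hmuind⟩ := ih lam' hcard' hnn
        exact ⟨S, mu, hmu0, hmuS, by rw [hmusum, hsum'], hmuind⟩
      rcases le_or_gt (G i₁) 0 with hle | hlt
      · refine main (-G) (by simp [hGsum]) ⟨i₁, by simpa using lt_of_le_of_ne hle hGne⟩ ?_
        intro i hi
        simp only [Pi.neg_apply, neg_eq_zero, hG]
        rw [dif_neg]
        simp [hS₀, hi]
      · refine main G hGsum ⟨i₁, hlt⟩ ?_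
        intro i hi
        simp only [hG]
        rw [dif_neg]
        simp [hS₀, hi]


lemma dot_sum_right {p : ℕ} {ι : Type*} (s : Finset ι) (w : Fin p → ℝ) (f : ι → Fin p → ℝ) :
    w ⬝ᵥ (∑ i ∈ s, f i) = ∑ i ∈ s, w ⬝ᵥ f i := by
  simp only [dotProduct, Finset.sum_apply, Finset.mul_sum]
  exact Finset.sum_comm

lemma sum_dot_left {p : ℕ} {ι : Type*} (s : Finset ι) (w : Fin p → ℝ) (f : ι → Fin p → ℝ) :
    (∑ i ∈ s, f i) ⬝ᵥ w = ∑ i ∈ s, f i ⬝ᵥ w := by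
  simp only [dotProduct, Finset.sum_apply, Finset.sum_mul]
  exact Finset.sum_comm

lemma rat_rep {n k : ℕ} (v : Fin k → Fin n → ℤ) (S : Finset (Fin k))
    (hind : LinearIndependent ℝ (fun i : S => ratGen v i))
    (mu : Fin k → ℝ) (hmu0 : ∀ i, 0 ≤ mu i) (hmuS : ∀ i, i ∉ S → mu i = 0)
    (x : Fin n → ℤ) (hx : intCast' x = ∑ i, mu i • ratGen v i) :
    ∃ m : Fin k → ℕ, ∀ i, i ∈ S → mu i = (m i : ℝ) / (denomD v S : ℝ) := by
  classical
  set G : Matrix S S ℤ := Matrix.of fun i j : S => (v i ⬝ᵥ v j : ℤ) with hGdef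
  set Gr : Matrix S S ℝ := (Int.castRingHom ℝ).mapMatrix G with hGrdef
  have hGr_entry : ∀ i j : S, Gr i j = ratGen v i ⬝ᵥ ratGen v j := by
    intro i j
    simp only [hGrdef, hGdef, RingHom.mapMatrix_apply, Matrix.map_apply, Matrix.of_apply,
      dotProduct, ratGen, Int.coe_castRingHom]
    push_cast
    rfl
  have hdetGr : Gr.det = ((G.det : ℤ) : ℝ) := by
    rw [hGrdef, ← RingHom.map_det]
    rfl
  -- determinant nonzero
  have hdet : Gr.det ≠ 0 := by
    intro h0
    obtain ⟨μ, hμne, hμ⟩ := Matrix.exists_mulVec_eq_zero_iff.mpr h0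
    set y : Fin n → ℝ := ∑ i : S, μ i • ratGen v i with hy
    have hyy : y ⬝ᵥ y = 0 := by
      have h1 : y ⬝ᵥ y = ∑ i : S, μ i * (ratGen v i ⬝ᵥ y) := by
        rw [hy, sum_dot_left]
        exact Finset.sum_congr rfl fun i _ => by rw [smul_dotProduct, smul_eq_mul]
      have h2 : ∀ i : S, ratGen v i ⬝ᵥ y = (Gr *ᵥ μ) i := by
        intro i
        rw [hy, dot_sum_right]
        have hterm : ∀ j : S, ratGen v (i : Fin k) ⬝ᵥ (μ j • ratGen v (j : Fin k))
            = Gr i j * μ j := fun j => by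
          rw [dotProduct_smul, smul_eq_mul, hGr_entry, mul_comm]
        rw [Finset.sum_congr rfl fun j _ => hterm j]
        simp [Matrix.mulVec, dotProduct]
      rw [h1]
      simp [h2, hμ]
    have hy0 : y = 0 := dotProduct_self_eq_zero.mp hyy
    have := Fintype.linearIndependent_iff.mp hind μ (by rw [← hy]; exact hy0)
    exact hμne (funext this)
  have hdetG : G.det ≠ 0 := fun h => hdet (by rw [hdetGr, h]; simp)
  -- the linear system
  set μS : S → ℝ := fun i => mu i with hμS
  set b : S → ℤ := fun i => v i ⬝ᵥ x with hb
  have hsys : Gr *ᵥ μS = fun i => (b i : ℝ) := by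
    funext i
    have h1 : (b i : ℝ) = ratGen v i ⬝ᵥ intCast' x := by
      simp only [hb, dotProduct, intCast', ratGen]
      push_cast
      rfl
    have h2 : ratGen v i ⬝ᵥ intCast' x = ∑ j, mu j * (ratGen v i ⬝ᵥ ratGen v j) := by
      rw [hx, dot_sum_right]
      exact Finset.sum_congr rfl fun j _ => by rw [dotProduct_smul, smul_eq_mul]
    have h3 : ∑ j, mu j * (ratGen v i ⬝ᵥ ratGen v j)
        = ∑ j ∈ S, mu j * (ratGen v i ⬝ᵥ ratGen v j) := by
      symm
      apply Finset.sum_subset (Finset.subset_univ S)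
      intro j _ hj
      simp [hmuS j hj]
    have h4 : ∑ j ∈ S, mu j * (ratGen v i ⬝ᵥ ratGen v j)
        = ∑ j : S, mu (j : Fin k) * (ratGen v i ⬝ᵥ ratGen v (j : Fin k)) :=
      (Finset.sum_coe_sort S _).symm
    rw [h1, h2, h3, h4]
    have hterm : ∀ j : S, mu (j : Fin k) * (ratGen v (i : Fin k) ⬝ᵥ ratGen v (j : Fin k))
        = Gr i j * μS j := fun j => by
      rw [hGr_entry, hμS, mul_comm]
    rw [Finset.sum_congr rfl fun j _ => hterm j]
    simp [Matrix.mulVec, dotProduct]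
  -- Cramer's rule
  set z : S → ℤ := Matrix.adjugate G *ᵥ b with hz
  have hkey : ∀ i : S, (G.det : ℝ) * mu i = (z i : ℝ) := by
    intro i
    have h1 : Matrix.adjugate Gr *ᵥ (Gr *ᵥ μS) = (Gr.det) • μS := by
      rw [Matrix.mulVec_mulVec, Matrix.adjugate_mul, Matrix.smul_mulVec,
        Matrix.one_mulVec]
    have hadj : Matrix.adjugate Gr = (Int.castRingHom ℝ).mapMatrix (Matrix.adjugate G) := by
      rw [hGrdef, RingHom.map_adjugate]
    have h2 : Matrix.adjugate Gr *ᵥ (fun i => (b i : ℝ)) = fun i => (z i : ℝ) := by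
      funext i
      simp only [hadj, hz, Matrix.mulVec, dotProduct, RingHom.mapMatrix_apply,
        Matrix.map_apply, Int.coe_castRingHom]
      push_cast
      rfl
    rw [hsys, h2] at h1
    have := congrFun h1.symm i
    simpa [hdetGr, hμS, smul_eq_mul] using this
  -- extract natural numbers
  set e : ℤ := G.det with he
  have hD : denomD v S = e.natAbs := by
    have h1 : 1 ≤ e.natAbs := Int.natAbs_pos.mpr hdetG
    simp only [denomD, ← hGdef, ← he]
    omega
  refine ⟨fun i => if h : i ∈ S then (z ⟨i, h⟩ * e.sign).toNat else 0, ?_⟩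
  intro i h
  simp only [dif_pos h]
  set w : ℤ := z ⟨i, h⟩ * e.sign with hw
  have hzi : ((z ⟨i, h⟩ : ℤ) : ℝ) = (e : ℝ) * mu i := (hkey ⟨i, h⟩).symm
  have habs : ((e.natAbs : ℕ) : ℝ) = |(e : ℝ)| := by
    rw [Nat.cast_natAbs, Int.cast_abs]
  have hwr : (w : ℝ) = mu i * (e.natAbs : ℝ) := by
    have hcw : (w : ℝ) = ((z ⟨i, h⟩ : ℤ) : ℝ) * ((e.sign : ℤ) : ℝ) := by
      rw [hw]; push_cast; ring
    rw [hcw, hzi, habs]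
    rcases hdetG.lt_or_gt with hlt | hgt
    · rw [Int.sign_eq_neg_one_iff_neg.mpr hlt, abs_of_neg (show (e : ℝ) < 0 by exact_mod_cast hlt)]
      push_cast
      ring
    · rw [Int.sign_eq_one_iff_pos.mpr hgt, abs_of_pos (show (0 : ℝ) < e by exact_mod_cast hgt)]
      push_cast
      ring
  have hw0 : 0 ≤ w := by
    have h1 : (0 : ℝ) ≤ (w : ℝ) := by
      rw [hwr]
      have := hmu0 i
      positivity
    exact_mod_cast h1
  have hDpos : (0 : ℝ) < (denomD v S : ℝ) := by
    have : 0 < denomD v S := lt_of_lt_of_le one_pos (le_max_right _ _)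
    exact_mod_cast this
  have hcast : ((w.toNat : ℕ) : ℝ) = (w : ℝ) := by exact_mod_cast Int.toNat_of_nonneg hw0
  rw [hcast, eq_div_iff hDpos.ne', hwr]
  congr 1
  exact_mod_cast congrArg (fun t : ℕ => (t : ℝ)) hD


lemma finite_vals {k : ℕ} (c : Fin k → ℝ) (hc : ∀ i, 0 ≤ c i)
    (D : Finset (Fin k) → ℕ) (hD : ∀ S, 0 < D S) (C : ℝ) :
    Set.Finite {t : ℝ | t ≤ C ∧ ∃ (S : Finset (Fin k)) (m : Fin k → ℕ),
      t = ∑ i ∈ S, ((m i : ℝ) / (D S : ℝ)) * c i} := by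
  classical
  set Dmax : ℕ := Finset.univ.sup D with hDmax
  set B : Fin k → ℕ := fun i =>
    if 0 < c i then Nat.floor ((max C 0) * (Dmax : ℝ) / c i) else 0 with hB
  have hsubset : {t : ℝ | t ≤ C ∧ ∃ (S : Finset (Fin k)) (m : Fin k → ℕ),
      t = ∑ i ∈ S, ((m i : ℝ) / (D S : ℝ)) * c i} ⊆
      (fun p : Finset (Fin k) × (Fin k → ℕ) =>
        ∑ i ∈ p.1, ((p.2 i : ℝ) / (D p.1 : ℝ)) * c i) ''
      ((Set.univ : Set (Finset (Fin k))) ×ˢ Set.pi Set.univ (fun i => Set.Iic (B i))) := by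
    rintro t ⟨htC, S, m, rfl⟩
    set m' : Fin k → ℕ := fun i => if i ∈ S ∧ 0 < c i then m i else 0 with hm'
    have hval : ∑ i ∈ S, ((m i : ℝ) / (D S : ℝ)) * c i
        = ∑ i ∈ S, ((m' i : ℝ) / (D S : ℝ)) * c i := by
      apply Finset.sum_congr rfl
      intro i hi
      by_cases hci : 0 < c i
      · rw [hm']; simp [hi, hci]
      · have : c i = 0 := le_antisymm (not_lt.mp hci) (hc i)
        simp [this]
    have hbox : ∀ i, m' i ≤ B i := by
      intro i
      by_cases hi : i ∈ S ∧ 0 < c i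
      · have hterm : ((m i : ℝ) / (D S : ℝ)) * c i ≤ max C 0 := by
          calc ((m i : ℝ) / (D S : ℝ)) * c i
              ≤ ∑ j ∈ S, ((m j : ℝ) / (D S : ℝ)) * c j := by
                apply Finset.single_le_sum (f := fun j => ((m j : ℝ) / (D S : ℝ)) * c j)
                · intro j _
                  have := hc j
                  positivity
                · exact hi.1
            _ ≤ C := htC
            _ ≤ max C 0 := le_max_left _ _
        have hDS : (0 : ℝ) < (D S : ℝ) := by exact_mod_cast hD S
        have hDle : (D S : ℝ) ≤ (Dmax : ℝ) := by
          exact_mod_cast Finset.le_sup (Finset.mem_univ S)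
        have h1 : (m i : ℝ) * c i ≤ max C 0 * (D S : ℝ) := by
          rw [div_mul_eq_mul_div, div_le_iff₀ hDS] at hterm
          linarith
        have h2 : (m i : ℝ) * c i ≤ max C 0 * (Dmax : ℝ) := by
          have : max C 0 * (D S : ℝ) ≤ max C 0 * (Dmax : ℝ) :=
            mul_le_mul_of_nonneg_left hDle (le_max_right _ _)
          linarith
        have h3 : (m i : ℝ) ≤ max C 0 * (Dmax : ℝ) / c i := by
          rw [le_div_iff₀ hi.2]
          exact h2
        have : m i ≤ Nat.floor (max C 0 * (Dmax : ℝ) / c i) := Nat.le_floor h3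
        simpa [hm', hB, hi, hi.2] using this
      · simp only [hm', if_neg hi]
        exact Nat.zero_le _
    exact ⟨(S, m'), ⟨Set.mem_univ _, fun i _ => hbox i⟩, hval.symm⟩
  apply Set.Finite.subset _ hsubset
  apply Set.Finite.image
  exact Set.Finite.prod Set.finite_univ (Set.Finite.pi fun i => Set.finite_Iic _)

/-- Let `σ` be a strongly convex rational cone containing the first orthant which is
nonnegative for a positive continuous total order `r`. For a nonzero Laurent series `ξ`
(a function `ℤⁿ → K`) with support in `γ + σ` and `ω ∈ σ^∨`, the set
`{α·ω | α ∈ Supp ξ}` attains a minimum. -/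
theorem min_of_omega_on_support {n : ℕ} (K : Type*) [Field K]
    (r : (Fin n → ℝ) → (Fin n → ℝ) → Prop)
    (htot : ∀ a b, r a b ∨ r b a)
    (htrans : ∀ a b c, r a b → r b c → r a c)
    (hadd : ∀ a b c, r a b → r (a + c) (b + c))
    (hanti : ∀ a b, r a b → r b a → a = b)
    (hpos : ∀ x : Fin n → ℝ, (∀ i, 0 ≤ x i) → r 0 x)
    (hcont : ∃ (s : ℕ) (w : Fin s → Fin n → ℝ), ∀ a b, r a b ↔ lexLe w a b)
    {k : ℕ} (v : Fin k → Fin n → ℤ)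
    (hsc : ∀ x ∈ polyCone (ratGen v), -x ∈ polyCone (ratGen v) → x = 0)
    (horth : ∀ x : Fin n → ℝ, (∀ i, 0 ≤ x i) → x ∈ polyCone (ratGen v))
    (hnn : ∀ x ∈ polyCone (ratGen v), r 0 x)
    (ξ : (Fin n → ℤ) → K) (γ : Fin n → ℤ)
    (hsupp : ∀ α, ξ α ≠ 0 → intCast' (α - γ) ∈ polyCone (ratGen v))
    (ω : Fin n → ℝ) (hω : ω ∈ dualCone (polyCone (ratGen v)))
    (hξ : ξ ≠ 0) :
    ∃ β, ξ β ≠ 0 ∧ ∀ α, ξ α ≠ 0 → intCast' β ⬝ᵥ ω ≤ intCast' α ⬝ᵥ ω := by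
  classical
  obtain ⟨α₀, hα₀⟩ : ∃ α, ξ α ≠ 0 := by
    by_contra h
    push_neg at h
    exact hξ (funext fun α => by simpa using h α)
  set c : Fin k → ℝ := fun i => ω ⬝ᵥ ratGen v i with hcdef
  have hc : ∀ i, 0 ≤ c i := by
    intro i
    apply hω
    exact ⟨fun j => if j = i then 1 else 0,
      fun j => by dsimp only; split <;> norm_num, by simp [ite_smul]⟩
  set D : Finset (Fin k) → ℕ := denomD v with hDdef
  have hD : ∀ S, 0 < D S := fun S => lt_of_lt_of_le one_pos (le_max_right _ _)
  set tval : (Fin n → ℤ) → ℝ := fun α => ω ⬝ᵥ intCast' (α - γ) with htval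
  have key : ∀ α, ξ α ≠ 0 → ∃ (S : Finset (Fin k)) (m : Fin k → ℕ),
      tval α = ∑ i ∈ S, ((m i : ℝ) / (D S : ℝ)) * c i := by
    intro α hα
    obtain ⟨lam, hlam0, hlameq⟩ := hsupp α hα
    obtain ⟨S, mu, hmu0, hmuS, hmusum, hind⟩ := cone_cara (ratGen v) _ lam le_rfl hlam0
    have hxeq : intCast' (α - γ) = ∑ i, mu i • ratGen v i := by rw [hlameq, hmusum]
    obtain ⟨m, hm⟩ := rat_rep v S hind mu hmu0 hmuS (α - γ) hxeq
    refine ⟨S, m, ?_⟩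
    have h1 : tval α = ∑ i, mu i * c i := by
      show ω ⬝ᵥ intCast' (α - γ) = _
      rw [hxeq, dot_sum_right]
      refine Finset.sum_congr rfl fun i _ => ?_
      rw [dotProduct_smul, smul_eq_mul]
    have h2 : ∑ i, mu i * c i = ∑ i ∈ S, mu i * c i := by
      symm
      apply Finset.sum_subset (Finset.subset_univ S)
      intro j _ hj
      simp [hmuS j hj]
    rw [h1, h2]
    refine Finset.sum_congr rfl fun i hi => ?_
    rw [hm i hi]
  set X := {t : ℝ | t ≤ tval α₀ ∧ ∃ α, ξ α ≠ 0 ∧ t = tval α} with hX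
  have hXfin : X.Finite := by
    apply Set.Finite.subset (finite_vals c hc D hD (tval α₀))
    rintro t ⟨h1, α, hα, rfl⟩
    exact ⟨h1, key α hα⟩
  have hXne : X.Nonempty := ⟨tval α₀, le_rfl, α₀, hα₀, rfl⟩
  obtain ⟨t₀, ht₀X, hmin⟩ := Set.exists_min_image X id hXfin hXne
  obtain ⟨ht₀le, β, hβ, hβval⟩ := ht₀X
  refine ⟨β, hβ, ?_⟩
  intro α hα
  have hrel : ∀ δ : Fin n → ℤ, intCast' δ ⬝ᵥ ω = intCast' γ ⬝ᵥ ω + tval δ := by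
    intro δ
    have hsplit : intCast' (δ - γ) = intCast' δ - intCast' γ := by
      funext j
      simp only [intCast', Pi.sub_apply]
      push_cast
      ring
    rw [htval]
    dsimp only
    rw [dotProduct_comm ω, hsplit, sub_dotProduct]
    ring
  rw [hrel β, hrel α]
  have hβα : tval β ≤ tval α := by
    rcases le_or_gt (tval α) (tval α₀) with hle | hlt
    · have hmem : tval α ∈ X := ⟨hle, α, hα, rfl⟩
      have := hmin _ hmem
      simp only [id] at this
      rw [← hβval]
      exact this
    · calc tval β = t₀ := hβval.symm
        _ ≤ tval α₀ := ht₀le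
        _ ≤ tval α := hlt.le
  linarith
end

section
/- Let F(T) = Σ_{m≥0} a_m T^m be a formal power series over a field K that satisfies a nonzero polynomial recurrence Q₀(m)a_m + Q₁(m+1)a_{m+1} + ⋯ + Q_N(m+N)a_{m+N} = 0 for all m ≥ 0, with polynomials Q₀,…,Q_N ∈ K[m], Q_N not identically zero. If F is not a polynomial, then the gaps between consecutive nonzero coefficients of F are bounded: there exists a constant C such that for every m with a_m ≠ 0, there exists m' with m < m' ≤ m + C and a_{m'} ≠ 0. -/
/-- A power series over a characteristic zero field whose coefficients satisfy a nonzero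
polynomial recurrence (P-recursive/D-finite) and which is not a polynomial has bounded
gaps between consecutive nonzero coefficients. -/
theorem gaps_of_P_recursive_bounded (K : Type*) [Field K] [CharZero K]
    (a : ℕ → K) (N : ℕ) (Q : Fin (N + 1) → Polynomial K)
    (hQN : Q (Fin.last N) ≠ 0)
    (hrec : ∀ m : ℕ,
      ∑ i : Fin (N + 1), (Q i).eval ((m + (i : ℕ) : ℕ) : K) * a (m + (i : ℕ)) = 0)
    (hnp : ∀ M : ℕ, ∃ m, M < m ∧ a m ≠ 0) :
    ∃ C : ℕ, ∀ m, a m ≠ 0 → ∃ m', m < m' ∧ m' ≤ m + C ∧ a m' ≠ 0 := by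
  classical
  have hfin : {x : K | (Q (Fin.last N)).IsRoot x}.Finite :=
    Polynomial.finite_setOf_isRoot hQN
  have hfin2 : {n : ℕ | (Q (Fin.last N)).eval ((n : ℕ) : K) = 0}.Finite :=
    hfin.preimage (Nat.cast_injective.injOn)
  obtain ⟨r, hr⟩ := hfin2.bddAbove
  refine ⟨N + r + 1, ?_⟩
  intro m hm
  by_contra h
  push_neg at h
  have hzero : ∀ k, m < k → a k = 0 := by
    intro k hk
    induction k using Nat.strong_induction_on with
    | _ k ih =>
      by_cases hk2 : k ≤ m + (N + r + 1)
      · exact h k hk hk2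
      · push_neg at hk2
        have hkN : N ≤ k := by omega
        have hQk : (Q (Fin.last N)).eval ((k : ℕ) : K) ≠ 0 := by
          intro h0
          have hk3 : k ≤ r := hr h0
          omega
        have hrecK := hrec (k - N)
        rw [Fin.sum_univ_castSucc] at hrecK
        have hsum0 : ∀ i : Fin N,
            (Q i.castSucc).eval (((k - N + ((i.castSucc : Fin (N+1)) : ℕ) : ℕ)) : K) *
              a (k - N + ((i.castSucc : Fin (N+1)) : ℕ)) = 0 := by
          intro i
          have hi : ((i.castSucc : Fin (N+1)) : ℕ) = (i : ℕ) := rfl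
          have hiz : a (k - N + (i : ℕ)) = 0 := by
            apply ih
            · omega
            · have := i.isLt; omega
          rw [hi, hiz, mul_zero]
        rw [Finset.sum_eq_zero (fun i _ => hsum0 i), zero_add] at hrecK
        have hlast : ((Fin.last N : Fin (N+1)) : ℕ) = N := rfl
        rw [hlast] at hrecK
        have hkk : k - N + N = k := by omega
        rw [hkk] at hrecK
        exact (mul_eq_zero.mp hrecK).resolve_left hQk
  obtain ⟨m', hm', hne⟩ := hnp m
  exact hne (hzero m' hm')
end

section
/- Let τ be a strongly convex rational polyhedral cone in ℝⁿ containing the first orthant, and let v ∈ τ generate a one-dimensional face (vertex) of τ. Assume there exists k < n with vᵢ < 0 for i ≤ k and vᵢ ≥ 0 for i > k. Then there exists ω ∈ τ^∨ such that 0 < ω·v < −ω_j v_j for all j ≤ k. -/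
open Matrix

open Finset in
lemma isClosed_polyCone : ∀ (k : ℕ) {n : ℕ} (u : Fin k → Fin n → ℝ), IsClosed (polyCone u) := by
  intro k
  induction k with
  | zero =>
    intro n u
    have : polyCone u = {0} := by
      ext x
      constructor
      · rintro ⟨lam, -, rfl⟩; simp
      · rintro rfl; exact ⟨0, fun i => le_refl 0, by simp⟩
    rw [this]; exact isClosed_singleton
  | succ k ih =>
    intro n u
    by_cases hdep : ∃ c : Fin (k+1) → ℝ, (∃ i, c i < 0) ∧ ∑ i, c i • u i = 0
    · obtain ⟨c, ⟨i₁, hi₁⟩, hsum⟩ := hdep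
      have key : polyCone u = ⋃ i ∈ {i : Fin (k+1) | c i < 0}, polyCone (u ∘ i.succAbove) := by
        ext x
        constructor
        · rintro ⟨lam, hlam, rfl⟩
          set S : Finset (Fin (k+1)) := Finset.univ.filter (fun i => c i < 0) with hS
          have hSne : S.Nonempty := ⟨i₁, by simp [hS, hi₁]⟩
          obtain ⟨i₀, hi₀S, hinf⟩ := Finset.exists_mem_eq_inf' hSne (fun i => lam i / (-c i))
          have hci₀ : c i₀ < 0 := by simpa [hS] using hi₀S
          set t : ℝ := lam i₀ / (-c i₀) with ht
          have htnn : 0 ≤ t := div_nonneg (hlam i₀) (by linarith)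
          set μ : Fin (k+1) → ℝ := fun i => lam i + t * c i with hμ
          have hμnn : ∀ i, 0 ≤ μ i := by
            intro i
            by_cases hci : c i < 0
            · have hle : t ≤ lam i / (-c i) := hinf ▸ Finset.inf'_le _ (by simp [hS, hci])
              have h2 : t * (-c i) ≤ lam i := (le_div_iff₀ (by linarith : (0:ℝ) < -c i)).mp hle
              have h3 : t * (-c i) = -(t * c i) := by ring
              show 0 ≤ lam i + t * c i
              linarith
            · push_neg at hci
              exact add_nonneg (hlam i) (mul_nonneg htnn hci)
          have hμi₀ : μ i₀ = 0 := by
            show lam i₀ + t * c i₀ = 0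
            have hc0 : (-c i₀) ≠ 0 := ne_of_gt (by linarith)
            rw [ht]
            field_simp
            rw [div_self (ne_of_lt hci₀)]; ring
          have hμsum : ∑ i, μ i • u i = ∑ i, lam i • u i := by
            have : ∑ i, μ i • u i = ∑ i, lam i • u i + t • ∑ i, c i • u i := by
              rw [Finset.smul_sum, ← Finset.sum_add_distrib]
              refine Finset.sum_congr rfl fun i _ => ?_
              show (lam i + t * c i) • u i = _
              rw [add_smul, smul_smul]
            rw [this, hsum, smul_zero, add_zero]
          refine Set.mem_biUnion (show i₀ ∈ {i : Fin (k+1) | c i < 0} from hci₀) ?_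
          refine ⟨fun j => μ (i₀.succAbove j), fun j => hμnn _, ?_⟩
          have := Fin.sum_univ_succAbove (fun i => μ i • u i) i₀
          rw [← hμsum, this, hμi₀, zero_smul, zero_add]
          rfl
        · intro hx
          obtain ⟨i, hi, lam, hlam, rfl⟩ := Set.mem_iUnion₂.mp hx
          refine ⟨Fin.insertNth i (0:ℝ) lam, ?_, ?_⟩
          · intro j
            by_cases hj : j = i
            · subst hj; simp
            · obtain ⟨j', rfl⟩ := Fin.exists_succAbove_eq hj
              rw [Fin.insertNth_apply_succAbove]
              exact hlam j'
          · rw [Fin.sum_univ_succAbove (fun j => (Fin.insertNth i (0:ℝ) lam : Fin (k+1) → ℝ) j • u j) i]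
            simp [Fin.insertNth_apply_succAbove]
      rw [key]
      exact Set.Finite.isClosed_biUnion (Set.toFinite _) fun i _ => ih _
    · push_neg at hdep
      set f : (Fin (k+1) → ℝ) →ₗ[ℝ] (Fin n → ℝ) :=
        { toFun := fun lam => ∑ i, lam i • u i
          map_add' := fun a b => by simp [add_smul, Finset.sum_add_distrib]
          map_smul' := fun c a => by simp [Finset.smul_sum, smul_smul] } with hf
      have hker : LinearMap.ker f = ⊥ := by
        rw [LinearMap.ker_eq_bot']
        intro d hd
        by_contra hdne
        by_cases hneg : ∃ i, d i < 0
        · obtain ⟨i, hi⟩ := hneg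
          exact absurd hd (fun h => absurd hi (not_lt.mpr ((hdep d ⟨i, hi⟩ h).elim)))
        · push_neg at hneg
          have hdsum : ∑ i, (-d) i • u i = 0 := by
            have : ∑ i, (-d) i • u i = -∑ i, d i • u i := by
              rw [← Finset.sum_neg_distrib]
              exact Finset.sum_congr rfl fun i _ => by simp
            rw [this]
            show -(f d) = 0
            rw [hd, neg_zero]
          have : ∃ i, (-d) i < 0 := by
            obtain ⟨i, hi⟩ := Function.ne_iff.mp hdne
            exact ⟨i, by simpa using lt_of_le_of_ne (hneg i) (Ne.symm (by simpa using hi))⟩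
          exact hdep (-d) this hdsum
      have hemb := LinearMap.isClosedEmbedding_of_injective hker
      have key : polyCone u = f '' {lam | ∀ i, 0 ≤ lam i} := by
        ext x
        simp only [Set.mem_image, Set.mem_setOf_eq]
        exact ⟨fun ⟨l, h1, h2⟩ => ⟨l, h1, h2.symm⟩, fun ⟨l, h1, h2⟩ => ⟨l, h1, h2.symm⟩⟩
      rw [key]
      refine hemb.isClosedMap _ ?_
      have horth : {lam : Fin (k+1) → ℝ | ∀ i, 0 ≤ lam i} = ⋂ i, {lam | 0 ≤ lam i} := by
        ext; simp [Set.mem_iInter]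
      rw [horth]
      exact isClosed_iInter fun i => isClosed_le continuous_const (continuous_apply i)

lemma farkas {n kk : ℕ} (u : Fin kk → Fin n → ℝ) (b : Fin n → ℝ) (hb : b ∉ polyCone u) :
    ∃ ω : Fin n → ℝ, (∀ i, 0 ≤ ω ⬝ᵥ u i) ∧ ω ⬝ᵥ b < 0 := by
  classical
  set e : EuclideanSpace ℝ (Fin n) ≃L[ℝ] (Fin n → ℝ) :=
    (EuclideanSpace.equiv (Fin n) ℝ) with he
  set K : ConvexCone ℝ (EuclideanSpace ℝ (Fin n)) :=
    { carrier := e ⁻¹' (polyCone u)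
      smul_mem' := by
        intro c hc x hx
        have hx' : e x ∈ polyCone u := hx
        have : e (c • x) = c • e x := by simp
        show e (c • x) ∈ polyCone u
        rw [this]
        obtain ⟨a, ha, hsum⟩ := hx'
        exact ⟨c • a, fun i => mul_nonneg (le_of_lt hc) (ha i),
          by rw [hsum]; simp [Finset.smul_sum, smul_smul]⟩
      add_mem' := by
        intro x hx y hy
        have : e (x + y) = e x + e y := by simp
        show e (x + y) ∈ polyCone u
        rw [this]
        obtain ⟨a, ha, hsa⟩ := hx
        obtain ⟨b', hb', hsb⟩ := hy
        exact ⟨a + b', fun i => add_nonneg (ha i) (hb' i),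
          by rw [hsa, hsb]; simp [add_smul, Finset.sum_add_distrib]⟩ } with hK
  have hne : (K : Set (EuclideanSpace ℝ (Fin n))).Nonempty :=
    ⟨e.symm 0, show e (e.symm 0) ∈ polyCone u by
      simp; exact ⟨0, fun _ => le_refl 0, by simp⟩⟩
  have hcl : IsClosed (K : Set (EuclideanSpace ℝ (Fin n))) :=
    (isClosed_polyCone _ u).preimage e.continuous
  have hbK : e.symm b ∉ K := by
    show ¬ e (e.symm b) ∈ polyCone u
    simpa using hb
  obtain ⟨y, hy1', hy2⟩ :=
    ProperCone.hyperplane_separation' (E := EuclideanSpace ℝ (Fin n))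
      (⟨{ carrier := (K : Set (EuclideanSpace ℝ (Fin n)))
          add_mem' := fun hx hy => K.add_mem hx hy
          zero_mem' := show e 0 ∈ polyCone u from ⟨0, fun _ => le_refl 0, by simp⟩
          smul_mem' := by
            intro c x hx
            obtain ⟨a, ha, hs⟩ := (hx : e x ∈ polyCone u)
            show e (c • x) ∈ polyCone u
            have hce : e (c • x) = (c:ℝ) • e x := map_smul e (c:ℝ) x
            rw [hce, hs]
            exact ⟨(c:ℝ) • a, fun i => mul_nonneg c.2 (ha i),
              by simp [Finset.smul_sum, smul_smul]⟩ }, hcl⟩ :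
        ProperCone ℝ (EuclideanSpace ℝ (Fin n))) hbK
  have hy1 : ∀ x ∈ K, 0 ≤ inner ℝ y x := fun x hx => by
    rw [real_inner_comm]; exact hy1' x hx
  refine ⟨e y, ?_, ?_⟩
  · intro i
    have hui : e.symm (u i) ∈ K := by
      show e (e.symm (u i)) ∈ polyCone u
      simp
      exact ⟨fun j => if j = i then 1 else 0, fun j => by positivity, by simp⟩
    have h := hy1 _ hui
    rw [PiLp.inner_apply] at h
    simp only [RCLike.inner_apply, starRingEnd_apply, star_trivial] at h
    have heq : (e y) ⬝ᵥ (u i) = ∑ x, e.symm (u i) x * y x := by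
      simp only [dotProduct]
      exact Finset.sum_congr rfl fun x _ => mul_comm _ _
    rw [heq]; exact h
  · have h := hy2
    rw [PiLp.inner_apply] at h
    simp only [RCLike.inner_apply, starRingEnd_apply, star_trivial] at h
    have heq : (e y) ⬝ᵥ b = ∑ x, y x * e.symm b x := by
      simp only [dotProduct]
      exact Finset.sum_congr rfl fun x _ => rfl
    rw [heq]; exact h

lemma dot_sum {n k : ℕ} (ω : Fin n → ℝ) (f : Fin k → Fin n → ℝ) :
    ω ⬝ᵥ (∑ i, f i) = ∑ i, ω ⬝ᵥ f i := by
  simp only [dotProduct, Finset.sum_apply, Finset.mul_sum]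
  exact Finset.sum_comm

lemma sum_dot {n k : ℕ} (f : Fin k → Fin n → ℝ) (x : Fin n → ℝ) :
    (∑ i, f i) ⬝ᵥ x = ∑ i, f i ⬝ᵥ x := by
  simp only [dotProduct, Finset.sum_apply, Finset.sum_mul]
  exact Finset.sum_comm

lemma dual_of_gens {n k : ℕ} {u : Fin k → Fin n → ℝ} {ω : Fin n → ℝ}
    (h : ∀ i, 0 ≤ ω ⬝ᵥ u i) : ω ∈ dualCone (polyCone u) := by
  rintro y ⟨lam, hlam, rfl⟩
  rw [dot_sum]
  refine Finset.sum_nonneg fun i _ => ?_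
  rw [dotProduct_smul]
  exact mul_nonneg (hlam i) (h i)

lemma smul_mem_polyCone {n k : ℕ} {u : Fin k → Fin n → ℝ} {c : ℝ} (hc : 0 ≤ c)
    {x : Fin n → ℝ} (hx : x ∈ polyCone u) : c • x ∈ polyCone u := by
  obtain ⟨a, ha, hax⟩ := hx
  exact ⟨c • a, fun i => mul_nonneg hc (ha i),
    by rw [hax]; simp [Finset.smul_sum, smul_smul]⟩

lemma single_nonneg' {n : ℕ} (j : Fin n) : ∀ i, (0:ℝ) ≤ (Pi.single j 1 : Fin n → ℝ) i := by
  intro i; by_cases h : i = j <;> simp [Pi.single_apply, h]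


/-- Let `τ` be a strongly convex rational polyhedral cone containing the first orthant and
let `v` generate a one-dimensional face (vertex) of `τ`, with `v i < 0` for `i < m` and
`v i ≥ 0` for `i ≥ m` (`m < n`). Then there exists `ω ∈ τ^∨` with
`0 < ω·v < -ω_j v_j` for all `j < m`. -/
theorem exists_omega_vertex_inequalities {n k : ℕ} (gens : Fin k → Fin n → ℤ)
    (hsc : ∀ x ∈ polyCone (ratGen gens), -x ∈ polyCone (ratGen gens) → x = 0)
    (horth : ∀ x : Fin n → ℝ, (∀ i, 0 ≤ x i) → x ∈ polyCone (ratGen gens))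
    (v : Fin n → ℝ) (hv : v ∈ polyCone (ratGen gens)) (hvne : v ≠ 0)
    (hvert : ∀ x ∈ polyCone (ratGen gens), ∀ y ∈ polyCone (ratGen gens), x + y = v →
      (∃ c : ℝ, 0 ≤ c ∧ x = c • v) ∨ (∃ c : ℝ, 0 ≤ c ∧ y = c • v))
    (m : ℕ) (hm : m < n)
    (hneg : ∀ i : Fin n, (i : ℕ) < m → v i < 0)
    (hpos : ∀ i : Fin n, m ≤ (i : ℕ) → 0 ≤ v i) :
    ∃ ω ∈ dualCone (polyCone (ratGen gens)),
      0 < ω ⬝ᵥ v ∧ ∀ j : Fin n, (j : ℕ) < m → ω ⬝ᵥ v < -(ω j * v j) := by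
  classical
  set τ := polyCone (ratGen gens) with hτ
  -- Step 1: find ψ ∈ τ∨ with ψ·v > 0
  have hnv : -v ∉ τ := fun h => hvne (hsc v hv h)
  obtain ⟨ψ, hψgen, hψv⟩ := farkas (ratGen gens) (-v) hnv
  have hψ : ψ ∈ dualCone τ := dual_of_gens hψgen
  have hψv' : 0 < ψ ⬝ᵥ v := by
    rw [dotProduct_neg] at hψv; linarith
  -- Step 2: for each j < m, find ω ∈ τ∨ with ω·v = 0 and ω j > 0
  have step2 : ∀ j : Fin n, (j:ℕ) < m → ∃ ω, ω ∈ dualCone τ ∧ ω ⬝ᵥ v = 0 ∧ 0 < ω j := by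
    intro j hj
    have hvj : v j < 0 := hneg j hj
    set u' : Fin (k+1) → Fin n → ℝ := Fin.snoc (ratGen gens) (-v) with hu'
    have hnotin : -((Pi.single j 1 : Fin n → ℝ)) ∉ polyCone u' := by
      rintro ⟨lam, hlam, hsum⟩
      set w : Fin n → ℝ := ∑ i : Fin k, lam i.castSucc • ratGen gens i with hwdef
      have hw : w ∈ τ := ⟨fun i => lam i.castSucc, fun i => hlam _, rfl⟩
      set cc : ℝ := lam (Fin.last k) with hcc
      have hccnn : 0 ≤ cc := hlam _
      have hsum' : -((Pi.single j 1 : Fin n → ℝ)) = w + cc • (-v) := by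
        rw [hsum, Fin.sum_univ_castSucc]
        simp only [hu', Fin.snoc_castSucc, Fin.snoc_last, hwdef, hcc]
      have hkey : ∀ i, cc * v i = w i + (Pi.single j 1 : Fin n → ℝ) i := by
        intro i
        have h := congrFun hsum' i
        simp only [Pi.add_apply, Pi.smul_apply, Pi.neg_apply, smul_eq_mul] at h
        linarith
      rcases eq_or_lt_of_le hccnn with hc0 | hcpos
      · -- cc = 0 : -e_j ∈ τ, contradiction with strong convexity
        have hwe : w = -((Pi.single j 1 : Fin n → ℝ)) := by
          funext i
          have := hkey i
          simp only [Pi.neg_apply]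
          rw [← hc0] at this
          linarith
        have h1 : (Pi.single j 1 : Fin n → ℝ) ∈ τ := horth _ (single_nonneg' j)
        have h2 : -((Pi.single j 1 : Fin n → ℝ)) ∈ τ := hwe ▸ hw
        have := hsc _ h1 h2
        have := congrFun this j
        simp at this
      · -- cc > 0 : use the vertex property
        have hccne : cc ≠ 0 := ne_of_gt hcpos
        have hx : cc⁻¹ • w ∈ τ := smul_mem_polyCone (by positivity) hw
        have hy : cc⁻¹ • (Pi.single j 1 : Fin n → ℝ) ∈ τ :=
          horth _ (fun i => mul_nonneg (by positivity) (single_nonneg' j i))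
        have hxy : cc⁻¹ • w + cc⁻¹ • (Pi.single j 1 : Fin n → ℝ) = v := by
          funext i
          have := hkey i
          simp only [Pi.add_apply, Pi.smul_apply, smul_eq_mul]
          field_simp
          linarith
        rcases hvert _ hx _ hy hxy with ⟨a, ha, hx_eq⟩ | ⟨a, ha, hy_eq⟩
        · -- x = a • v leads to v being a negative multiple of e_j
          have h1 : ∀ i, w i = cc * a * v i := by
            intro i
            have := congrFun hx_eq i
            simp only [Pi.smul_apply, smul_eq_mul] at this
            field_simp at this
            linarith
          have h2 : ∀ i, cc * (1 - a) * v i = (Pi.single j 1 : Fin n → ℝ) i := by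
            intro i
            have := hkey i
            have := h1 i
            linarith [hkey i, h1 i]
          have hja : cc * (1 - a) * v j = 1 := by
            have := h2 j; simpa using this
          have h1a : 1 - a < 0 := by
            by_contra hcon
            push_neg at hcon
            have hq : 0 ≤ cc * (1 - a) := mul_nonneg hcpos.le hcon
            have := mul_nonpos_of_nonneg_of_nonpos hq hvj.le
            linarith
          have hvz : ∀ i, i ≠ j → v i = 0 := by
            intro i hij
            have := h2 i
            rw [Pi.single_apply, if_neg hij] at this
            have hne : cc * (1 - a) ≠ 0 := by
              intro h; rw [h, zero_mul] at hja; norm_num at hja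
            rcases mul_eq_zero.mp this with h | h
            · exact absurd h hne
            · exact h
          have : -v ∈ τ := by
            apply horth
            intro i
            by_cases hij : i = j
            · subst hij; simp only [Pi.neg_apply]; linarith
            · simp only [Pi.neg_apply, hvz i hij, neg_zero, le_refl]
          exact hnv this
        · -- y = a • v is impossible since y j > 0 but (a • v) j ≤ 0
          have := congrFun hy_eq j
          simp only [Pi.smul_apply, smul_eq_mul, Pi.single_eq_same, mul_one] at this
          have h1 : (0:ℝ) < cc⁻¹ := by positivity
          have h2 : a * v j ≤ 0 := mul_nonpos_of_nonneg_of_nonpos ha (le_of_lt hvj)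
          linarith
    obtain ⟨ω, hωgen, hωe⟩ := farkas u' _ hnotin
    have hωdual : ω ∈ dualCone τ := by
      apply dual_of_gens
      intro i
      have := hωgen i.castSucc
      rwa [hu', Fin.snoc_castSucc] at this
    have hωvle : ω ⬝ᵥ v ≤ 0 := by
      have := hωgen (Fin.last k)
      rw [hu', Fin.snoc_last, dotProduct_neg] at this
      linarith
    have hωvge : 0 ≤ ω ⬝ᵥ v := hωdual v hv
    have hωj : 0 < ω j := by
      rw [dotProduct_neg, dotProduct_single, mul_one] at hωe
      linarith
    exact ⟨ω, hωdual, le_antisymm hωvle hωvge, hωj⟩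
  -- Step 3: combine
  choose W hW1 hW2 hW3 using step2
  set g : Fin n → (Fin n → ℝ) := fun j => if h : (j:ℕ) < m then W j h else 0 with hg
  have hgdual : ∀ j, g j ∈ dualCone τ := by
    intro j
    by_cases h : (j:ℕ) < m
    · simp only [hg, dif_pos h]; exact hW1 j h
    · simp only [hg, dif_neg h]
      intro y _; rw [zero_dotProduct]
  have hgv : ∀ j, g j ⬝ᵥ v = 0 := by
    intro j
    by_cases h : (j:ℕ) < m
    · simp only [hg, dif_pos h]; exact hW2 j h
    · simp only [hg, dif_neg h, zero_dotProduct]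
  have hgnn : ∀ i j, 0 ≤ g i j := by
    intro i j
    have := hgdual i ((Pi.single j 1 : Fin n → ℝ)) (horth _ (single_nonneg' j))
    rwa [dotProduct_single, mul_one] at this
  set Ws : Fin n → ℝ := ∑ i, g i with hWs
  have hWsdual : Ws ∈ dualCone τ := by
    intro y hy
    rw [hWs, sum_dot]
    exact Finset.sum_nonneg fun i _ => hgdual i y hy
  have hWsv : Ws ⬝ᵥ v = 0 := by
    rw [hWs, sum_dot]
    exact Finset.sum_eq_zero fun i _ => hgv i
  have hWsj : ∀ j : Fin n, (j:ℕ) < m → 0 < Ws j := by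
    intro j hj
    have h1 : 0 < g j j := by simp only [hg, dif_pos hj]; exact hW3 j hj
    have h2 : g j j ≤ Ws j := by
      rw [hWs, Finset.sum_apply]
      exact Finset.single_le_sum (fun i _ => hgnn i j) (Finset.mem_univ j)
    linarith
  -- choose t large enough
  set r : Fin n → ℝ := fun j => (ψ ⬝ᵥ v + ψ j * v j) / (Ws j * (-v j)) with hr
  set t : ℝ := 1 + ∑ j, |r j| with htdef
  have htpos : 0 < t := by
    rw [htdef]
    have : 0 ≤ ∑ j, |r j| := Finset.sum_nonneg fun j _ => abs_nonneg _
    linarith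
  have htgt : ∀ j : Fin n, r j < t := by
    intro j
    have h1 : |r j| ≤ ∑ i, |r i| :=
      Finset.single_le_sum (fun i _ => abs_nonneg (r i)) (Finset.mem_univ j)
    have h2 : r j ≤ |r j| := le_abs_self _
    rw [htdef]; linarith
  refine ⟨ψ + t • Ws, ?_, ?_, ?_⟩
  · intro y hy
    rw [add_dotProduct, smul_dotProduct, smul_eq_mul]
    have := hψ y hy
    have := hWsdual y hy
    nlinarith
  · rw [add_dotProduct, smul_dotProduct, smul_eq_mul, hWsv, mul_zero, add_zero]
    exact hψv'
  · intro j hj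
    have hvj : v j < 0 := hneg j hj
    have hWj : 0 < Ws j := hWsj j hj
    have hB : 0 < Ws j * (-v j) := mul_pos hWj (by linarith)
    have hkey : ψ ⬝ᵥ v + ψ j * v j < t * (Ws j * (-v j)) := by
      have := htgt j
      rw [hr] at this
      exact (div_lt_iff₀ hB).mp this
    rw [add_dotProduct, smul_dotProduct, smul_eq_mul, hWsv, mul_zero, add_zero]
    simp only [Pi.add_apply, Pi.smul_apply, smul_eq_mul]
    nlinarith
end

section
/- Let ω ∈ Int(σ^∨) where σ ⊆ ℝⁿ is a strongly convex polyhedral cone, and let γ ∈ ℝⁿ. Then for every real number l, the set {u ∈ (γ + σ) ∩ ℤⁿ | u·ω ≤ l} is finite. -/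
open Matrix

/-- For `ω` in the interior of the dual of a strongly convex polyhedral cone `σ` and any
`γ ∈ ℝⁿ`, `l ∈ ℝ`, the slab `{u ∈ (γ + σ) ∩ ℤⁿ | u·ω ≤ l}` is finite. -/
theorem slab_lattice_points_finite {n k : ℕ} (gens : Fin k → (Fin n → ℝ))
    (hsc : ∀ x ∈ polyCone gens, -x ∈ polyCone gens → x = 0)
    (ω : Fin n → ℝ) (hω : ω ∈ interior (dualCone (polyCone gens)))
    (γ : Fin n → ℝ) (l : ℝ) :
    {α : Fin n → ℤ | intCast' α ∈ (γ + ·) '' polyCone gens ∧ intCast' α ⬝ᵥ ω ≤ l}.Finite := by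
  rw [mem_interior_iff_mem_nhds, Metric.mem_nhds_iff] at hω
  obtain ⟨ε, hε, hball⟩ := hω
  -- key estimate: (ε/2) * ‖x‖ ≤ ω ⬝ᵥ x for x in the cone
  have key : ∀ x ∈ polyCone gens, (ε / 2) * ‖x‖ ≤ ω ⬝ᵥ x := by
    intro x hx
    have hωx : 0 ≤ ω ⬝ᵥ x := hball (Metric.mem_ball_self hε) x hx
    have hcoord : ∀ i, (ε / 2) * |x i| ≤ ω ⬝ᵥ x := by
      intro i
      set v : Fin n → ℝ := ω - ((ε / 2) * Real.sign (x i)) • (Pi.single i 1 : Fin n → ℝ) with hv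
      have hvmem : v ∈ Metric.ball ω ε := by
        rw [Metric.mem_ball, dist_eq_norm]
        have : v - ω = -(((ε / 2) * Real.sign (x i)) • (Pi.single i 1 : Fin n → ℝ)) := by
          rw [hv]; abel
        rw [this, norm_neg, norm_smul]
        have h1 : ‖(Pi.single i 1 : Fin n → ℝ)‖ ≤ 1 := le_of_eq (by simp [Pi.norm_single])
        have h2 : |Real.sign (x i)| ≤ 1 := by
          rcases lt_trichotomy (x i) 0 with h|h|h
          · rw [Real.sign_of_neg h]; norm_num
          · simp [h]
          · rw [Real.sign_of_pos h]; norm_num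
        calc ‖(ε / 2) * Real.sign (x i)‖ * ‖(Pi.single i 1 : Fin n → ℝ)‖
            ≤ ‖(ε / 2) * Real.sign (x i)‖ * 1 := by
              exact mul_le_mul_of_nonneg_left h1 (norm_nonneg _)
          _ = (ε / 2) * |Real.sign (x i)| := by
              rw [mul_one, norm_mul, Real.norm_eq_abs, Real.norm_eq_abs,
                abs_of_pos (by linarith : (0:ℝ) < ε / 2)]
          _ ≤ (ε / 2) * 1 := by
              exact mul_le_mul_of_nonneg_left h2 (by linarith)
          _ < ε := by linarith
      have hvx : 0 ≤ v ⬝ᵥ x := hball hvmem x hx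
      have hdot : v ⬝ᵥ x = ω ⬝ᵥ x - (ε / 2) * (Real.sign (x i) * x i) := by
        rw [hv, sub_dotProduct, smul_dotProduct]
        have : (Pi.single i 1 : Fin n → ℝ) ⬝ᵥ x = x i := by
          simp [dotProduct, Pi.single_apply, ite_mul, Finset.sum_ite_eq']
        rw [this, smul_eq_mul]; ring
      have hsgn : Real.sign (x i) * x i = |x i| := by
        rcases lt_trichotomy (x i) 0 with h|h|h
        · rw [Real.sign_of_neg h, abs_of_neg h]; ring
        · simp [h]
        · rw [Real.sign_of_pos h, abs_of_pos h]; ring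
      rw [hdot, hsgn] at hvx
      linarith
    rcases le_or_gt (‖x‖) 0 with h|h
    · have : ‖x‖ = 0 := le_antisymm h (norm_nonneg _)
      rw [this]; simpa using hωx
    · have hle : ‖x‖ ≤ (ω ⬝ᵥ x) / (ε / 2) := by
        apply (pi_norm_le_iff_of_nonneg (by positivity)).2
        intro i
        rw [Real.norm_eq_abs, le_div_iff₀ (by linarith)]
        calc |x i| * (ε / 2) = (ε / 2) * |x i| := by ring
          _ ≤ ω ⬝ᵥ x := hcoord i
      calc (ε / 2) * ‖x‖ ≤ (ε / 2) * ((ω ⬝ᵥ x) / (ε / 2)) :=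
            mul_le_mul_of_nonneg_left hle (by linarith)
        _ = ω ⬝ᵥ x := by field_simp
  -- bound the set
  set R : ℝ := ‖γ‖ + (l - ω ⬝ᵥ γ) / (ε / 2) with hR
  set M : ℤ := ⌈|R|⌉ with hM
  apply Set.Finite.subset (Set.finite_Icc (fun _ : Fin n => -M) (fun _ => M))
  rintro α ⟨⟨x, hx, hxα⟩, hl⟩
  have hbound : ‖intCast' α‖ ≤ R := by
    have h1 : (ε / 2) * ‖x‖ ≤ ω ⬝ᵥ x := key x hx
    have h2 : ω ⬝ᵥ x ≤ l - ω ⬝ᵥ γ := by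
      have : intCast' α ⬝ᵥ ω = ω ⬝ᵥ γ + ω ⬝ᵥ x := by
        rw [← hxα, dotProduct_comm, dotProduct_add]
      linarith
    have h3 : ‖x‖ ≤ (l - ω ⬝ᵥ γ) / (ε / 2) := by
      rw [le_div_iff₀ (by linarith)]
      calc ‖x‖ * (ε / 2) = (ε / 2) * ‖x‖ := by ring
        _ ≤ ω ⬝ᵥ x := h1
        _ ≤ l - ω ⬝ᵥ γ := h2
    calc ‖intCast' α‖ = ‖γ + x‖ := by rw [← hxα]
      _ ≤ ‖γ‖ + ‖x‖ := norm_add_le _ _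
      _ ≤ R := by rw [hR]; linarith
  have hcoord : ∀ i, |(α i : ℝ)| ≤ (M : ℝ) := by
    intro i
    have := norm_le_pi_norm (intCast' α) i
    rw [Real.norm_eq_abs] at this
    calc |(α i : ℝ)| ≤ ‖intCast' α‖ := this
      _ ≤ R := hbound
      _ ≤ |R| := le_abs_self R
      _ ≤ (M : ℝ) := Int.le_ceil _
  constructor <;> intro i <;> have := hcoord i <;> rw [abs_le] at this
  · have : -(M:ℝ) ≤ (α i : ℝ) := this.1
    exact_mod_cast this
  · have : (α i : ℝ) ≤ (M:ℝ) := this.2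
    exact_mod_cast this
end
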